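/- arXiv:2009.14808 — 3 statements merged into one kernel-verified Lean document; each statement's English description precedes it below -/
import Mathlib

section
/- Let n ≥ 1 be an integer and d = 2^n. Let ψ ∈ ℂ^d be a unit vector, H a Hermitian d×d complex matrix, θ₀ ∈ ℝ, and let U : ℝ → M_d(ℂ) be a family of matrices such that U(θ) is unitary for every θ and θ ↦ U(θ) is (entrywise) differentiable at θ₀. For each unitary V define the cost C(θ, V) = ⟨ψ, U(θ)ᴴ V H Vᴴ U(θ) ψ⟩, and let g(V) be the derivative of θ ↦ C(θ, V) at θ₀. Then the average of the cost gradient over a Haar-random target unitary vanishes: ∫ g(V) dμ(V) = 0. -/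
open MeasureTheory Matrix

/-- Borel measurable structure on the unitary group `U(d)`. -/
noncomputable instance (d : ℕ) : MeasurableSpace (Matrix.unitaryGroup (Fin d) ℂ) := borel _
instance (d : ℕ) : BorelSpace (Matrix.unitaryGroup (Fin d) ℂ) := ⟨rfl⟩

/-- **Proposition 1 (vanishing average gradient).** Let `d = 2^n` (`n ≥ 1`), `ψ ∈ ℂ^d` a unit
vector, `H` Hermitian, and `θ ↦ U(θ)` a family of unitaries entrywise differentiable at `θ₀`.
For each unitary `V` let `g V` be the derivative at `θ₀` of the cost
`θ ↦ ⟨ψ, U(θ)ᴴ V H Vᴴ U(θ) ψ⟩`. Then the average of the gradient over a Haar-random target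
unitary `V` vanishes: `∫ g V dμ(V) = 0`. -/
theorem average_cost_gradient_vanishes (n : ℕ) (hn : 1 ≤ n) (d : ℕ) (hd : d = 2 ^ n)
    (μ : Measure (Matrix.unitaryGroup (Fin d) ℂ)) [μ.IsHaarMeasure] [IsProbabilityMeasure μ]
    (ψ : Fin d → ℂ) (hψ : star ψ ⬝ᵥ ψ = 1)
    (H : Matrix (Fin d) (Fin d) ℂ) (hH : H.IsHermitian)
    (θ₀ : ℝ)
    (U : ℝ → Matrix (Fin d) (Fin d) ℂ)
    (hU : ∀ θ, U θ ∈ Matrix.unitaryGroup (Fin d) ℂ)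
    (U' : Matrix (Fin d) (Fin d) ℂ)
    (hU' : ∀ i j, HasDerivAt (fun θ => U θ i j) (U' i j) θ₀)
    (g : Matrix.unitaryGroup (Fin d) ℂ → ℂ)
    (hg : ∀ V : Matrix.unitaryGroup (Fin d) ℂ,
      HasDerivAt
        (fun θ => star ψ ⬝ᵥ ((U θ)ᴴ * (V : Matrix (Fin d) (Fin d) ℂ) * H *
            (V : Matrix (Fin d) (Fin d) ℂ)ᴴ * U θ) *ᵥ ψ)
        (g V) θ₀) :
    ∫ V : Matrix.unitaryGroup (Fin d) ℂ, g V ∂μ = 0 := by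
  classical
  haveI : MeasurableMul (Matrix.unitaryGroup (Fin d) ℂ) := by
    constructor
    · intro c
      have h : Continuous (fun x : Matrix.unitaryGroup (Fin d) ℂ => c * x) :=
        Continuous.subtype_mk (continuous_const.matrix_mul continuous_subtype_val) _
      exact h.measurable
    · intro c
      have h : Continuous (fun x : Matrix.unitaryGroup (Fin d) ℂ => x * c) :=
        Continuous.subtype_mk (continuous_subtype_val.matrix_mul continuous_const) _
      exact h.measurable
  have hdpos : 0 < d := by subst hd; positivity
  set i₀ : Fin d := ⟨0, hdpos⟩ with hi₀
  set A : Matrix.unitaryGroup (Fin d) ℂ → Matrix (Fin d) (Fin d) ℂ :=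
    fun V => (V : Matrix (Fin d) (Fin d) ℂ) * H * (V : Matrix (Fin d) (Fin d) ℂ)ᴴ with hA
  -- integrability of the entries of `A`
  have hint : ∀ k l, Integrable (fun V => A V k l) μ := by
    intro k l
    have hc : Continuous A :=
      (continuous_subtype_val.matrix_mul continuous_const).matrix_mul
        continuous_subtype_val.matrix_conjTranspose
    have hce : Continuous (fun V => A V k l) :=
      (continuous_apply l).comp ((continuous_apply k).comp hc)
    refine ⟨hce.aestronglyMeasurable, HasFiniteIntegral.of_bounded
      (C := ∑ a, ∑ b, ‖H a b‖) (ae_of_all μ fun V => ?_)⟩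
    have hV : ∀ a b, ‖(V : Matrix (Fin d) (Fin d) ℂ) a b‖ ≤ 1 :=
      fun a b => entry_norm_bound_of_unitary V.2 a b
    have he : A V k l = ∑ a, ∑ b, (V : Matrix (Fin d) (Fin d) ℂ) k a * H a b
        * star ((V : Matrix (Fin d) (Fin d) ℂ) l b) := by
      simp only [hA, Matrix.mul_apply, Matrix.conjTranspose_apply, Finset.sum_mul]
      rw [Finset.sum_comm]
    rw [he]
    refine (norm_sum_le _ _).trans (Finset.sum_le_sum fun a _ => (norm_sum_le _ _).trans
      (Finset.sum_le_sum fun b _ => ?_))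
    rw [norm_mul, norm_mul, norm_star]
    calc ‖(V : Matrix (Fin d) (Fin d) ℂ) k a‖ * ‖H a b‖ * ‖(V : Matrix (Fin d) (Fin d) ℂ) l b‖
        ≤ 1 * ‖H a b‖ * 1 := by
          gcongr
          · exact hV k a
          · exact hV l b
      _ = ‖H a b‖ := by ring
  -- the averaged matrix `M`
  set M : Matrix (Fin d) (Fin d) ℂ := Matrix.of (fun k l => ∫ V, A V k l ∂μ) with hM
  -- invariance of `M` under conjugation by unitaries
  have hinv : ∀ W : Matrix.unitaryGroup (Fin d) ℂ,
      (W : Matrix (Fin d) (Fin d) ℂ) * M * (W : Matrix (Fin d) (Fin d) ℂ)ᴴ = M := by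
    intro W
    ext k l
    have step1 : ((W : Matrix (Fin d) (Fin d) ℂ) * M * (W : Matrix (Fin d) (Fin d) ℂ)ᴴ) k l
        = ∑ a, ∑ b, (W : Matrix (Fin d) (Fin d) ℂ) k a
            * (∫ V, A V a b ∂μ) * star ((W : Matrix (Fin d) (Fin d) ℂ) l b) := by
      simp only [hM, Matrix.mul_apply, Matrix.conjTranspose_apply, Finset.sum_mul,
        Matrix.of_apply]
      rw [Finset.sum_comm]
    rw [step1]
    have step2 : ∀ a b, (W : Matrix (Fin d) (Fin d) ℂ) k a
          * (∫ V, A V a b ∂μ) * star ((W : Matrix (Fin d) (Fin d) ℂ) l b)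
        = ∫ V, (W : Matrix (Fin d) (Fin d) ℂ) k a * A V a b
            * star ((W : Matrix (Fin d) (Fin d) ℂ) l b) ∂μ := by
      intro a b
      rw [← MeasureTheory.integral_const_mul, ← MeasureTheory.integral_mul_const]
    simp only [step2]
    have swap1 : ∀ a : Fin d, ∑ b, ∫ V, (W : Matrix (Fin d) (Fin d) ℂ) k a * A V a b
          * star ((W : Matrix (Fin d) (Fin d) ℂ) l b) ∂μ
        = ∫ V, ∑ b, (W : Matrix (Fin d) (Fin d) ℂ) k a * A V a b
          * star ((W : Matrix (Fin d) (Fin d) ℂ) l b) ∂μ := by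
      intro a
      rw [MeasureTheory.integral_finset_sum]
      intro b _
      exact ((hint a b).const_mul _).mul_const _
    simp only [swap1]
    rw [← MeasureTheory.integral_finset_sum]
    swap
    · intro a _
      exact integrable_finset_sum _ (fun b _ => ((hint a b).const_mul _).mul_const _)
    have step4 : ∀ V : Matrix.unitaryGroup (Fin d) ℂ,
        ∑ a, ∑ b, (W : Matrix (Fin d) (Fin d) ℂ) k a * A V a b
          * star ((W : Matrix (Fin d) (Fin d) ℂ) l b)
        = A (W * V) k l := by
      intro V
      have h1 : A (W * V) = (W : Matrix (Fin d) (Fin d) ℂ) * A V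
          * (W : Matrix (Fin d) (Fin d) ℂ)ᴴ := by
        simp only [hA, Submonoid.coe_mul, Matrix.conjTranspose_mul]
        noncomm_ring
      rw [h1]
      simp only [Matrix.mul_apply, Matrix.conjTranspose_apply, Finset.sum_mul]
      rw [Finset.sum_comm]
    simp only [step4]
    exact MeasureTheory.integral_mul_left_eq_self (fun V => A V k l) W
  -- `M` commutes with every unitary matrix
  have hcomm : ∀ B ∈ Matrix.unitaryGroup (Fin d) ℂ, B * M = M * B := by
    intro B hB
    have hB' : Bᴴ * B = 1 := by
      have := mem_unitaryGroup_iff'.mp hB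
      rwa [Matrix.star_eq_conjTranspose] at this
    have h := hinv ⟨B, hB⟩
    calc B * M = B * M * (Bᴴ * B) := by rw [hB', mul_one]
      _ = (B * M * Bᴴ) * B := by noncomm_ring
      _ = M * B := by rw [show B * M * Bᴴ = M from h]
  -- off-diagonal entries of `M` vanish
  have hMoff : ∀ i j : Fin d, i ≠ j → M i j = 0 := by
    intro i j hij
    have hdiagmem : Matrix.diagonal (fun t => if t = i then (-1:ℂ) else 1)
        ∈ Matrix.unitaryGroup (Fin d) ℂ := by
      rw [Matrix.mem_unitaryGroup_iff', Matrix.star_eq_conjTranspose,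
        Matrix.diagonal_conjTranspose, Matrix.diagonal_mul_diagonal]
      ext a b
      by_cases h : a = b
      · subst h
        by_cases h2 : a = i <;> simp [Matrix.diagonal_apply, Matrix.one_apply, h2]
      · simp [Matrix.diagonal_apply_ne _ h, Matrix.one_apply, h]
    have h := hcomm _ hdiagmem
    have h2 : (Matrix.diagonal (fun t => if t = i then (-1:ℂ) else 1) * M) i j
        = (M * Matrix.diagonal (fun t => if t = i then (-1:ℂ) else 1)) i j := by rw [h]
    rw [Matrix.diagonal_mul, Matrix.mul_diagonal] at h2
    rw [if_pos rfl, if_neg (Ne.symm hij)] at h2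
    have h3 : (2:ℂ) * M i j = 0 := by linear_combination -h2
    simpa using (mul_eq_zero.mp h3).resolve_left two_ne_zero
  -- the diagonal entries of `M` are all equal
  have hMdiag : ∀ i j : Fin d, M i i = M j j := by
    intro i j
    by_cases hij : i = j
    · rw [hij]
    · set σ := Equiv.swap i j with hσ
      set S : Matrix (Fin d) (Fin d) ℂ :=
        Matrix.of (fun a b => if σ a = b then (1:ℂ) else 0) with hS
      have hSmem : S ∈ Matrix.unitaryGroup (Fin d) ℂ := by
        rw [Matrix.mem_unitaryGroup_iff]
        ext a b
        simp only [Matrix.mul_apply, Matrix.star_apply, hS, Matrix.of_apply, Matrix.one_apply,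
          apply_ite (star : ℂ → ℂ), star_one, star_zero, ite_mul, one_mul, zero_mul]
        rw [Finset.sum_ite_eq Finset.univ (σ a)]
        simp [Equiv.apply_eq_iff_eq, eq_comm]
      have hSM : ∀ a b, (S * M) a b = M (σ a) b := by
        intro a b
        simp only [Matrix.mul_apply, hS, Matrix.of_apply, ite_mul, one_mul, zero_mul]
        rw [Finset.sum_ite_eq Finset.univ (σ a)]
        simp
      have hMS : ∀ a b, (M * S) a b = M a (σ b) := by
        intro a b
        simp only [Matrix.mul_apply, hS, Matrix.of_apply, mul_ite, mul_one, mul_zero]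
        have : ∀ c : Fin d, (σ c = b) = (c = σ b) := by
          intro c
          simp [Equiv.apply_eq_iff_eq_symm_apply, Equiv.symm_swap, hσ]
        simp only [this]
        rw [Finset.sum_ite_eq' Finset.univ (σ b)]
        simp
      have h := hcomm _ hSmem
      have h2 : (S * M) i j = (M * S) i j := by rw [h]
      rw [hSM, hMS] at h2
      rw [hσ] at h2
      simpa [Equiv.swap_apply_left, Equiv.swap_apply_right] using h2.symm
  -- derivative of the entries of `θ ↦ U θ *ᵥ ψ`
  have hw : ∀ k, HasDerivAt (fun θ => (U θ *ᵥ ψ) k) ((U' *ᵥ ψ) k) θ₀ := by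
    intro k
    simp only [Matrix.mulVec, dotProduct]
    exact HasDerivAt.fun_sum (fun i _ => (hU' k i).mul_const (ψ i))
  -- the key skew-symmetry identity
  have hK : U'ᴴ * U θ₀ + (U θ₀)ᴴ * U' = 0 := by
    ext i j
    have hconst : ∀ θ, ∑ k, star (U θ k i) * U θ k j = (1 : Matrix (Fin d) (Fin d) ℂ) i j := by
      intro θ
      have h1 : star (U θ) * U θ = 1 := mem_unitaryGroup_iff'.mp (hU θ)
      rw [← h1]
      simp [Matrix.mul_apply, Matrix.star_apply]
    have hc : HasDerivAt (fun θ => ∑ k, star (U θ k i) * U θ k j) (0 : ℂ) θ₀ := by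
      simp only [hconst]
      exact hasDerivAt_const _ _
    have hs : HasDerivAt (fun θ => ∑ k, star (U θ k i) * U θ k j)
        (∑ k, (star (U' k i) * U θ₀ k j + star (U θ₀ k i) * U' k j)) θ₀ :=
      HasDerivAt.fun_sum fun k _ => ((hU' k i).star.mul (hU' k j))
    have h0 := hc.unique hs
    have h2 : (U'ᴴ * U θ₀ + (U θ₀)ᴴ * U') i j
        = ∑ k, (star (U' k i) * U θ₀ k j + star (U θ₀ k i) * U' k j) := by
      simp [Matrix.add_apply, Matrix.mul_apply, Matrix.conjTranspose_apply,
        Finset.sum_add_distrib]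
    rw [h2, ← h0]
    simp
  -- coefficients of the explicit derivative
  set c : Fin d → Fin d → ℂ := fun k l =>
    star ((U' *ᵥ ψ) k) * (U θ₀ *ᵥ ψ) l + star ((U θ₀ *ᵥ ψ) k) * (U' *ᵥ ψ) l with hcdef
  -- explicit derivative of the cost function
  have hD : ∀ V : Matrix.unitaryGroup (Fin d) ℂ,
      HasDerivAt
        (fun θ => star ψ ⬝ᵥ ((U θ)ᴴ * (V : Matrix (Fin d) (Fin d) ℂ) * H *
            (V : Matrix (Fin d) (Fin d) ℂ)ᴴ * U θ) *ᵥ ψ)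
        (∑ k, ∑ l, c k l * A V k l) θ₀ := by
    intro V
    have key : ∀ θ, star ψ ⬝ᵥ ((U θ)ᴴ * (V : Matrix (Fin d) (Fin d) ℂ) * H *
          (V : Matrix (Fin d) (Fin d) ℂ)ᴴ * U θ) *ᵥ ψ
        = ∑ k, ∑ l, star ((U θ *ᵥ ψ) k) * (A V k l * (U θ *ᵥ ψ) l) := by
      intro θ
      have hassoc : (U θ)ᴴ * (V : Matrix (Fin d) (Fin d) ℂ) * H *
          (V : Matrix (Fin d) (Fin d) ℂ)ᴴ * U θ = (U θ)ᴴ * A V * U θ := by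
        simp only [hA]
        noncomm_ring
      rw [hassoc, ← Matrix.mulVec_mulVec, ← Matrix.mulVec_mulVec,
        Matrix.dotProduct_mulVec, ← Matrix.star_mulVec]
      simp [dotProduct, Matrix.mulVec, Finset.mul_sum]
    simp only [key]
    have h := HasDerivAt.fun_sum (fun k (_ : k ∈ Finset.univ) => HasDerivAt.fun_sum
      (fun l (_ : l ∈ Finset.univ) => ((hw k).star.mul ((hw l).const_mul (A V k l)))))
    refine h.congr_deriv ?_
    refine Finset.sum_congr rfl fun k _ => Finset.sum_congr rfl fun l _ => ?_
    simp only [hcdef]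
    ring
  have hgD : ∀ V : Matrix.unitaryGroup (Fin d) ℂ,
      g V = ∑ k, ∑ l, c k l * A V k l := fun V => (hg V).unique (hD V)
  -- the trace-like coefficient sum vanishes
  have hsum0 : ∑ k, c k k = 0 := by
    have h1 : ∑ k, c k k
        = star (U' *ᵥ ψ) ⬝ᵥ (U θ₀ *ᵥ ψ) + star (U θ₀ *ᵥ ψ) ⬝ᵥ (U' *ᵥ ψ) := by
      simp only [hcdef, dotProduct, Finset.sum_add_distrib, Pi.star_apply]
    rw [h1, Matrix.star_mulVec, Matrix.star_mulVec, ← Matrix.dotProduct_mulVec,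
      ← Matrix.dotProduct_mulVec, Matrix.mulVec_mulVec, Matrix.mulVec_mulVec,
      ← dotProduct_add, ← Matrix.add_mulVec, hK]
    simp
  -- put everything together
  calc ∫ V, g V ∂μ = ∫ V, ∑ k, ∑ l, c k l * A V k l ∂μ := by simp only [hgD]
    _ = ∑ k, ∑ l, c k l * M k l := by
        rw [MeasureTheory.integral_finset_sum _
          (fun k _ => integrable_finset_sum _ (fun l _ => (hint k l).const_mul _))]
        refine Finset.sum_congr rfl fun k _ => ?_
        rw [MeasureTheory.integral_finset_sum _ (fun l _ => (hint k l).const_mul _)]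
        refine Finset.sum_congr rfl fun l _ => ?_
        rw [MeasureTheory.integral_const_mul]
        rfl
    _ = ∑ k, c k k * M k k := by
        refine Finset.sum_congr rfl fun k _ => Finset.sum_eq_single k
          (fun l _ hlk => by rw [hMoff k l (fun h => hlk h.symm), mul_zero]) ?_
        intro h
        exact absurd (Finset.mem_univ k) h
    _ = ∑ k, c k k * M i₀ i₀ := Finset.sum_congr rfl fun k _ => by rw [hMdiag k i₀]
    _ = (∑ k, c k k) * M i₀ i₀ := by rw [Finset.sum_mul]
    _ = 0 := by rw [hsum0, zero_mul]
end

section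
/- Let n ≥ 1, d_S = 2^n, and d_D, d_R ≥ 1, and index the Hilbert space ℂ^{d_S} ⊗ ℂ^{d_D} ⊗ ℂ^{d_R} by triples (s, e, r). Let (p_i) be finitely many nonnegative reals summing to 1, let each Ψ_i be a unit vector in ℂ^{d_S} ⊗ ℂ^{d_D} ⊗ ℂ^{d_R}, and let each H_i be a Hermitian matrix on ℂ^{d_S} ⊗ ℂ^{d_R}, extended to H̃_i on the full space by (H̃_i)_{(s,e,r),(s',e',r')} = (H_i)_{(s,r),(s',r')} · δ_{e e'}. Let θ ↦ U(θ) be a family of unitary matrices on ℂ^{d_S} ⊗ ℂ^{d_D}, entrywise differentiable at θ₀ ∈ ℝ, extended to Ũ(θ) on the full space by (Ũ(θ))_{(s,e,r),(s',e',r')} = (U(θ))_{(s,e),(s',e')} · δ_{r r'}. For a d_S×d_S unitary V let Ṽ = V ⊗ I_{d_D} ⊗ I_{d_R} and define the generalized cost C_gen(θ, V) = Σ_i p_i ⟨Ψ_i, Ũ(θ)ᴴ Ṽ H̃_i Ṽᴴ Ũ(θ) Ψ_i⟩, and let g(V) be its derivative in θ at θ₀. Then the Haar average of the gradient vanishes: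 ∫ g(V) dμ(V) = 0, where μ is the normalized Haar probability measure on the d_S×d_S unitary group. -/
open MeasureTheory Matrix
open scoped Kronecker

/-- Extension of a measurement operator `H` on `ℂ^{d_S} ⊗ ℂ^{d_R}` to the full space
`ℂ^{d_S} ⊗ ℂ^{d_D} ⊗ ℂ^{d_R}`: `(H̃)_{(s,e,r),(s',e',r')} = H_{(s,r),(s',r')} δ_{e e'}`. -/
noncomputable def extMeas (dS dD dR : ℕ)
    (H : Matrix (Fin dS × Fin dR) (Fin dS × Fin dR) ℂ) :
    Matrix (Fin dS × Fin dD × Fin dR) (Fin dS × Fin dD × Fin dR) ℂ :=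
  Matrix.of fun p q => H (p.1, p.2.2) (q.1, q.2.2) * (if p.2.1 = q.2.1 then 1 else 0)

/-- Extension of an ansatz unitary `U` on `ℂ^{d_S} ⊗ ℂ^{d_D}` to the full space
`ℂ^{d_S} ⊗ ℂ^{d_D} ⊗ ℂ^{d_R}`: `(Ũ)_{(s,e,r),(s',e',r')} = U_{(s,e),(s',e')} δ_{r r'}`. -/
noncomputable def extAnsatz (dS dD dR : ℕ)
    (U : Matrix (Fin dS × Fin dD) (Fin dS × Fin dD) ℂ) :
    Matrix (Fin dS × Fin dD × Fin dR) (Fin dS × Fin dD × Fin dR) ℂ :=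
  Matrix.of fun p q => U (p.1, p.2.1) (q.1, q.2.1) * (if p.2.2 = q.2.2 then 1 else 0)


section AuxLemmas


private lemma entry_continuous (d : ℕ) (i a : Fin d) :
    Continuous fun V : Matrix.unitaryGroup (Fin d) ℂ => (V : Matrix (Fin d) (Fin d) ℂ) i a := by
  exact (continuous_apply a).comp ((continuous_apply i).comp continuous_subtype_val)

private lemma entry_integrable (d : ℕ) (μ : Measure (Matrix.unitaryGroup (Fin d) ℂ))
    [IsProbabilityMeasure μ] (i a j b : Fin d) :
    Integrable (fun V : Matrix.unitaryGroup (Fin d) ℂ =>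
      (V : Matrix (Fin d) (Fin d) ℂ) i a * star ((V : Matrix (Fin d) (Fin d) ℂ) j b)) μ := by
  refine ⟨((entry_continuous d i a).mul (entry_continuous d j b).star).aestronglyMeasurable, ?_⟩
  refine HasFiniteIntegral.of_bounded (C := 1) (Filter.Eventually.of_forall fun V => ?_)
  have b1 := entry_norm_bound_of_unitary V.2 i a
  have b2 := entry_norm_bound_of_unitary V.2 j b
  rw [norm_mul, norm_star]
  exact mul_le_one₀ b1 (norm_nonneg _) b2

private lemma perm_unitary (d : ℕ) (σ : Equiv.Perm (Fin d)) :
    (σ.toPEquiv.toMatrix : Matrix (Fin d) (Fin d) ℂ) ∈ Matrix.unitaryGroup (Fin d) ℂ := by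
  rw [Matrix.mem_unitaryGroup_iff']
  have he : ∀ i j, (σ.toPEquiv.toMatrix : Matrix (Fin d) (Fin d) ℂ) i j
      = (1 : Matrix (Fin d) (Fin d) ℂ) (σ i) j := fun i j => by
    simp [PEquiv.toMatrix_apply, Matrix.one_apply]
  ext x y
  simp only [Matrix.mul_apply, Matrix.conjTranspose_apply, he,
    Matrix.one_apply, Matrix.star_apply]
  rw [Fintype.sum_bijective σ σ.bijective _
    (fun k => star (if k = x then (1:ℂ) else 0) * if k = y then 1 else 0) (fun k => rfl)]
  simp only [apply_ite (star : ℂ → ℂ), star_one, star_zero, ite_mul, one_mul, zero_mul]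
  simp [Finset.sum_ite_eq]
private lemma moment (d : ℕ) (μ : Measure (Matrix.unitaryGroup (Fin d) ℂ))
    [μ.IsHaarMeasure] [IsProbabilityMeasure μ] (i a j b : Fin d) :
    (∫ V : Matrix.unitaryGroup (Fin d) ℂ,
        (V : Matrix (Fin d) (Fin d) ℂ) i a * star ((V : Matrix (Fin d) (Fin d) ℂ) j b) ∂μ)
      = if i = j ∧ a = b then ((d : ℂ))⁻¹ else 0 := by
  by_cases hij : i = j
  · subst hij
    have hrow : ∀ i' : Fin d,
        (∫ V : Matrix.unitaryGroup (Fin d) ℂ,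
            (V : Matrix (Fin d) (Fin d) ℂ) i' a * star ((V : Matrix (Fin d) (Fin d) ℂ) i' b) ∂μ)
          = ∫ V : Matrix.unitaryGroup (Fin d) ℂ,
            (V : Matrix (Fin d) (Fin d) ℂ) i a * star ((V : Matrix (Fin d) (Fin d) ℂ) i b) ∂μ := by
      intro i'
      set σ : Equiv.Perm (Fin d) := Equiv.swap i' i with hσ
      set W : Matrix.unitaryGroup (Fin d) ℂ := ⟨σ.toPEquiv.toMatrix, perm_unitary d σ⟩ with hW
      have h := integral_mul_left_eq_self (μ := μ)
        (fun V : Matrix.unitaryGroup (Fin d) ℂ =>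
          (V : Matrix (Fin d) (Fin d) ℂ) i' a * star ((V : Matrix (Fin d) (Fin d) ℂ) i' b)) W
      rw [← h]
      congr 1
      funext V
      have hcoe : ((W * V : Matrix.unitaryGroup (Fin d) ℂ) : Matrix (Fin d) (Fin d) ℂ)
          = σ.toPEquiv.toMatrix * (V : Matrix (Fin d) (Fin d) ℂ) := rfl
      rw [hcoe, PEquiv.toMatrix_toPEquiv_mul]
      simp [σ, Matrix.submatrix_apply, Equiv.swap_apply_left]
    have hsum : (d : ℂ) * (∫ V : Matrix.unitaryGroup (Fin d) ℂ,
        (V : Matrix (Fin d) (Fin d) ℂ) i a * star ((V : Matrix (Fin d) (Fin d) ℂ) i b) ∂μ)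
        = if a = b then 1 else 0 := by
      have h1 : ∑ i' : Fin d, (∫ V : Matrix.unitaryGroup (Fin d) ℂ,
          (V : Matrix (Fin d) (Fin d) ℂ) i' a * star ((V : Matrix (Fin d) (Fin d) ℂ) i' b) ∂μ)
          = (d : ℂ) * ∫ V : Matrix.unitaryGroup (Fin d) ℂ,
            (V : Matrix (Fin d) (Fin d) ℂ) i a * star ((V : Matrix (Fin d) (Fin d) ℂ) i b) ∂μ := by
        rw [Finset.sum_congr rfl (fun i' _ => hrow i')]
        simp [Finset.sum_const, Finset.card_univ, nsmul_eq_mul]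
      rw [← h1, ← integral_finset_sum _ (fun i' _ => entry_integrable d μ i' a i' b)]
      have h2 : ∀ V : Matrix.unitaryGroup (Fin d) ℂ,
          ∑ i' : Fin d, (V : Matrix (Fin d) (Fin d) ℂ) i' a * star ((V : Matrix (Fin d) (Fin d) ℂ) i' b)
            = if a = b then 1 else 0 := by
        intro V
        have h3 : (star (V : Matrix (Fin d) (Fin d) ℂ) * (V : Matrix (Fin d) (Fin d) ℂ)) b a
            = (1 : Matrix (Fin d) (Fin d) ℂ) b a := by rw [V.2.1]
        simp only [Matrix.mul_apply, Matrix.star_apply, Matrix.star_eq_conjTranspose,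
          Matrix.conjTranspose_apply, Matrix.one_apply] at h3
        calc ∑ i' : Fin d, (V : Matrix (Fin d) (Fin d) ℂ) i' a * star ((V : Matrix (Fin d) (Fin d) ℂ) i' b)
            = ∑ x : Fin d, star ((V : Matrix (Fin d) (Fin d) ℂ) x b) * (V : Matrix (Fin d) (Fin d) ℂ) x a :=
              Finset.sum_congr rfl (fun x _ => mul_comm _ _)
          _ = if b = a then 1 else 0 := h3
          _ = if a = b then 1 else 0 := by simp [eq_comm]
      simp_rw [h2]
      simp
    have hd0 : (d : ℂ) ≠ 0 := Nat.cast_ne_zero.mpr i.pos.ne'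
    by_cases hab : a = b
    · rw [if_pos ⟨rfl, hab⟩]
      rw [if_pos hab] at hsum
      rw [inv_eq_one_div, eq_div_iff hd0]
      linear_combination hsum
    · rw [if_neg (fun h => hab h.2)]
      rw [if_neg hab] at hsum
      exact (mul_eq_zero.mp hsum).resolve_left hd0
  · rw [if_neg (fun h => hij h.1)]
    set D : Matrix (Fin d) (Fin d) ℂ := Matrix.diagonal (fun k => if k = i then (-1 : ℂ) else 1) with hD
    have hDmem : D ∈ Matrix.unitaryGroup (Fin d) ℂ := by
      rw [Matrix.mem_unitaryGroup_iff']
      have hstar : star D = D := by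
        have hfun : (star fun k : Fin d => if k = i then (-1:ℂ) else 1)
            = fun k : Fin d => if k = i then (-1:ℂ) else 1 := by
          funext kk
          by_cases hk : kk = i <;> simp [hk, Pi.star_apply]
        rw [Matrix.star_eq_conjTranspose, hD, Matrix.diagonal_conjTranspose, hfun]
      rw [hstar, hD, Matrix.diagonal_mul_diagonal]
      have : (fun k : Fin d => (if k = i then (-1:ℂ) else 1) * (if k = i then (-1:ℂ) else 1))
          = fun _ => (1:ℂ) := by
        funext k; by_cases hk : k = i <;> simp [hk]
      rw [this, Matrix.diagonal_one]
    set W : Matrix.unitaryGroup (Fin d) ℂ := ⟨D, hDmem⟩ with hW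
    have h := integral_mul_left_eq_self (μ := μ)
      (fun V : Matrix.unitaryGroup (Fin d) ℂ =>
        (V : Matrix (Fin d) (Fin d) ℂ) i a * star ((V : Matrix (Fin d) (Fin d) ℂ) j b)) W
    have h2 : (fun V : Matrix.unitaryGroup (Fin d) ℂ =>
        ((W * V : Matrix.unitaryGroup (Fin d) ℂ) : Matrix (Fin d) (Fin d) ℂ) i a
          * star (((W * V : Matrix.unitaryGroup (Fin d) ℂ) : Matrix (Fin d) (Fin d) ℂ) j b))
        = fun V : Matrix.unitaryGroup (Fin d) ℂ =>
          -((V : Matrix (Fin d) (Fin d) ℂ) i a * star ((V : Matrix (Fin d) (Fin d) ℂ) j b)) := by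
      funext V
      have hcoe : ((W * V : Matrix.unitaryGroup (Fin d) ℂ) : Matrix (Fin d) (Fin d) ℂ)
          = D * (V : Matrix (Fin d) (Fin d) ℂ) := rfl
      rw [hcoe, hD]
      rw [Matrix.diagonal_mul, Matrix.diagonal_mul]
      have hji : j ≠ i := Ne.symm hij
      rw [if_pos rfl, if_neg hji, one_mul]
      ring
    rw [h2, integral_neg] at h
    linear_combination (-1/2 : ℂ) * h


lemma deriv_unitary {m : Type*} [Fintype m] [DecidableEq m] (θ₀ : ℝ)
    (U : ℝ → Matrix m m ℂ) (hU : ∀ θ, U θ ∈ Matrix.unitaryGroup m ℂ)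
    (U' : Matrix m m ℂ) (hU' : ∀ i j, HasDerivAt (fun θ => U θ i j) (U' i j) θ₀) :
    U'ᴴ * U θ₀ + (U θ₀)ᴴ * U' = 0 := by
  ext i j
  have hconst : (fun θ => ∑ k, star (U θ k i) * U θ k j) = fun _ => (1 : Matrix m m ℂ) i j := by
    funext θ
    have h1 := (hU θ).1
    calc ∑ k, star (U θ k i) * U θ k j = (star (U θ) * U θ) i j := by
          simp [Matrix.mul_apply, Matrix.star_eq_conjTranspose, Matrix.conjTranspose_apply]
      _ = (1 : Matrix m m ℂ) i j := by rw [h1]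
  have hd : HasDerivAt (fun θ => ∑ k, star (U θ k i) * U θ k j)
      (∑ k, (star (U' k i) * U θ₀ k j + star (U θ₀ k i) * U' k j)) θ₀ :=
    HasDerivAt.fun_sum fun k _ => ((hU' k i).star.mul (hU' k j))
  rw [hconst] at hd
  have h0 := (hasDerivAt_const θ₀ ((1 : Matrix m m ℂ) i j)).unique hd
  have h2 : (U'ᴴ * U θ₀ + (U θ₀)ᴴ * U') i j
      = ∑ k, (star (U' k i) * U θ₀ k j + star (U θ₀ k i) * U' k j) := by
    simp [Matrix.add_apply, Matrix.mul_apply, Matrix.conjTranspose_apply,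
      Finset.sum_add_distrib]
  rw [h2, ← h0]
  simp

end AuxLemmas

section ExtLemmas
variable {dS dD dR : ℕ}


lemma extA_mul (A B : Matrix (Fin dS × Fin dD) (Fin dS × Fin dD) ℂ) :
    extAnsatz dS dD dR (A * B) = extAnsatz dS dD dR A * extAnsatz dS dD dR B := by
  ext p q
  simp only [extAnsatz, Matrix.of_apply, Matrix.mul_apply, Fintype.sum_prod_type]
  simp only [mul_ite, ite_mul, mul_zero, zero_mul, mul_one, one_mul,
    Finset.sum_ite_eq, Finset.sum_ite_eq', Finset.mem_univ, if_true, Finset.sum_mul]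
  by_cases h : p.2.2 = q.2.2 <;> simp [h]

lemma extA_conjTranspose (A : Matrix (Fin dS × Fin dD) (Fin dS × Fin dD) ℂ) :
    (extAnsatz dS dD dR A)ᴴ = extAnsatz dS dD dR Aᴴ := by
  ext p q
  simp only [extAnsatz, Matrix.conjTranspose_apply, Matrix.of_apply, star_mul', star_one,
    star_zero, apply_ite (star : ℂ → ℂ)]
  by_cases h : p.2.2 = q.2.2
  · simp [h, mul_comm]
  · have h' : ¬ q.2.2 = p.2.2 := fun hh => h hh.symm
    simp [h, h']

lemma extA_add (A B : Matrix (Fin dS × Fin dD) (Fin dS × Fin dD) ℂ) :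
    extAnsatz dS dD dR (A + B) = extAnsatz dS dD dR A + extAnsatz dS dD dR B := by
  ext p q
  simp only [extAnsatz, Matrix.of_apply, Matrix.add_apply]
  split <;> simp

lemma extA_zero : extAnsatz dS dD dR (0 : Matrix (Fin dS × Fin dD) (Fin dS × Fin dD) ℂ) = 0 := by
  ext p q
  simp [extAnsatz]

/-- The averaged (twirled) measurement matrix. -/
noncomputable def avgMeas (dS dD dR : ℕ) (H : Matrix (Fin dS × Fin dR) (Fin dS × Fin dR) ℂ) :
    Matrix (Fin dS × Fin dD × Fin dR) (Fin dS × Fin dD × Fin dR) ℂ :=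
  Matrix.of fun p q => (if p.1 = q.1 then 1 else 0) * (if p.2.1 = q.2.1 then 1 else 0) *
    ((dS : ℂ)⁻¹ * ∑ s : Fin dS, H (s, p.2.2) (s, q.2.2))

lemma avgMeas_comm (H : Matrix (Fin dS × Fin dR) (Fin dS × Fin dR) ℂ)
    (A : Matrix (Fin dS × Fin dD) (Fin dS × Fin dD) ℂ) :
    avgMeas dS dD dR H * extAnsatz dS dD dR A = extAnsatz dS dD dR A * avgMeas dS dD dR H := by
  ext p q
  simp only [avgMeas, extAnsatz, Matrix.of_apply, Matrix.mul_apply, Fintype.sum_prod_type]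
  simp only [mul_ite, ite_mul, mul_zero, zero_mul, mul_one, one_mul,
    Finset.sum_ite_eq, Finset.sum_ite_eq', Finset.mem_univ, if_true]
  by_cases h : p.2.2 = q.2.2 <;> simp [h] <;> ring

lemma dot_expand {N : Type*} [Fintype N] (u v : N → ℂ) (T : Matrix N N ℂ) :
    u ⬝ᵥ (T *ᵥ v) = ∑ a : N, ∑ b : N, u a * T a b * v b := by
  simp only [dotProduct, Matrix.mulVec, Finset.mul_sum]
  exact Finset.sum_congr rfl fun a _ => Finset.sum_congr rfl fun b _ => by ring

lemma quadform_expand {N : Type*} [Fintype N] (A B T : Matrix N N ℂ) (ψ : N → ℂ) :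
    star ψ ⬝ᵥ (Aᴴ * T * B) *ᵥ ψ
      = ∑ a : N, ∑ b : N, star ((A *ᵥ ψ) a) * T a b * ((B *ᵥ ψ) b) := by
  rw [show Aᴴ * T * B = Aᴴ * (T * B) from by rw [Matrix.mul_assoc]]
  rw [← Matrix.mulVec_mulVec, Matrix.dotProduct_mulVec, ← Matrix.star_mulVec,
    ← Matrix.mulVec_mulVec, dot_expand]
  exact Finset.sum_congr rfl fun a _ => Finset.sum_congr rfl fun b _ => by
    rw [Pi.star_apply]

lemma sandwich_apply (V : Matrix (Fin dS) (Fin dS) ℂ)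
    (M : Matrix (Fin dS × Fin dD × Fin dR) (Fin dS × Fin dD × Fin dR) ℂ)
    (a b : Fin dS × Fin dD × Fin dR) :
    ((V ⊗ₖ (1 : Matrix (Fin dD × Fin dR) (Fin dD × Fin dR) ℂ)) * M
        * (V ⊗ₖ (1 : Matrix (Fin dD × Fin dR) (Fin dD × Fin dR) ℂ))ᴴ) a b
      = ∑ t : Fin dS, ∑ s : Fin dS, V a.1 s * M (s, a.2) (t, b.2) * star (V b.1 t) := by
  simp only [Matrix.mul_apply, Matrix.conjTranspose_apply, Matrix.kroneckerMap_apply,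
    Matrix.one_apply, Fintype.sum_prod_type, mul_ite, ite_mul, mul_zero, zero_mul,
    mul_one, one_mul, star_mul', star_one, star_zero, apply_ite (star : ℂ → ℂ),
    Finset.sum_ite_eq, Finset.sum_ite_eq', Finset.mem_univ, if_true,
    Finset.sum_mul, Finset.mul_sum]


end ExtLemmas
/-- **Proposition 2 (vanishing average gradient of the generalized cost).** With training data
`{Ψ_i, H_i}` on `ℂ^{d_S} ⊗ ℂ^{d_D} ⊗ ℂ^{d_R}` (weights `p_i ≥ 0`, `Σ p_i = 1`, unit vectors
`Ψ_i`, Hermitian `H_i` on `S ⊗ R`), a dilated ansatz `θ ↦ U(θ)` (unitary on `S ⊗ D`,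
entrywise differentiable at `θ₀`), target `Ṽ = V ⊗ I ⊗ I`, and generalized cost
`C_gen(θ,V) = Σ_i p_i ⟨Ψ_i, Ũ(θ)ᴴ Ṽ H̃_i Ṽᴴ Ũ(θ) Ψ_i⟩` with gradient `g V` at `θ₀`:
the Haar average of the gradient vanishes, `∫ g V dμ(V) = 0`. -/
theorem average_generalized_cost_gradient_vanishes
    (n : ℕ) (hn : 1 ≤ n) (dS : ℕ) (hdS : dS = 2 ^ n) (dD dR : ℕ) (hdD : 1 ≤ dD) (hdR : 1 ≤ dR)
    (μ : Measure (Matrix.unitaryGroup (Fin dS) ℂ)) [μ.IsHaarMeasure] [IsProbabilityMeasure μ]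
    (k : ℕ) (p : Fin k → ℝ) (hp : ∀ i, 0 ≤ p i) (hpsum : ∑ i, p i = 1)
    (Ψ : Fin k → (Fin dS × Fin dD × Fin dR → ℂ)) (hΨ : ∀ i, star (Ψ i) ⬝ᵥ Ψ i = 1)
    (H : Fin k → Matrix (Fin dS × Fin dR) (Fin dS × Fin dR) ℂ) (hH : ∀ i, (H i).IsHermitian)
    (θ₀ : ℝ)
    (U : ℝ → Matrix (Fin dS × Fin dD) (Fin dS × Fin dD) ℂ)
    (hU : ∀ θ, U θ ∈ Matrix.unitaryGroup (Fin dS × Fin dD) ℂ)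
    (U' : Matrix (Fin dS × Fin dD) (Fin dS × Fin dD) ℂ)
    (hU' : ∀ i j, HasDerivAt (fun θ => U θ i j) (U' i j) θ₀)
    (g : Matrix.unitaryGroup (Fin dS) ℂ → ℂ)
    (hg : ∀ V : Matrix.unitaryGroup (Fin dS) ℂ,
      HasDerivAt
        (fun θ => ∑ i, (p i : ℂ) *
          (star (Ψ i) ⬝ᵥ
            ((extAnsatz dS dD dR (U θ))ᴴ *
              ((V : Matrix (Fin dS) (Fin dS) ℂ) ⊗ₖ
                (1 : Matrix (Fin dD × Fin dR) (Fin dD × Fin dR) ℂ)) *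
              extMeas dS dD dR (H i) *
              ((V : Matrix (Fin dS) (Fin dS) ℂ) ⊗ₖ
                (1 : Matrix (Fin dD × Fin dR) (Fin dD × Fin dR) ℂ))ᴴ *
              extAnsatz dS dD dR (U θ)) *ᵥ Ψ i))
        (g V) θ₀) :
    ∫ V : Matrix.unitaryGroup (Fin dS) ℂ, g V ∂μ = 0 := by
  classical
  -- abbreviations
  have hw : ∀ (i : Fin k) (a : Fin dS × Fin dD × Fin dR),
      HasDerivAt (fun θ => (extAnsatz dS dD dR (U θ) *ᵥ Ψ i) a)
        ((extAnsatz dS dD dR U' *ᵥ Ψ i) a) θ₀ := by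
    intro i a
    show HasDerivAt
      (fun θ => ∑ q : Fin dS × Fin dD × Fin dR,
        (U θ (a.1, a.2.1) (q.1, q.2.1) * (if a.2.2 = q.2.2 then (1:ℂ) else 0)) * Ψ i q)
      (∑ q : Fin dS × Fin dD × Fin dR,
        (U' (a.1, a.2.1) (q.1, q.2.1) * (if a.2.2 = q.2.2 then (1:ℂ) else 0)) * Ψ i q) θ₀
    exact HasDerivAt.fun_sum fun q _ =>
      ((hU' (a.1, a.2.1) (q.1, q.2.1)).mul_const _).mul_const _
  have hder : ∀ V : Matrix.unitaryGroup (Fin dS) ℂ,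
      HasDerivAt
        (fun θ => ∑ i, (p i : ℂ) * ∑ a, ∑ b,
          star ((extAnsatz dS dD dR (U θ) *ᵥ Ψ i) a)
            * (((V : Matrix (Fin dS) (Fin dS) ℂ) ⊗ₖ
                  (1 : Matrix (Fin dD × Fin dR) (Fin dD × Fin dR) ℂ))
                * extMeas dS dD dR (H i)
                * ((V : Matrix (Fin dS) (Fin dS) ℂ) ⊗ₖ
                  (1 : Matrix (Fin dD × Fin dR) (Fin dD × Fin dR) ℂ))ᴴ) a b
            * ((extAnsatz dS dD dR (U θ) *ᵥ Ψ i) b))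
        (∑ i, (p i : ℂ) * ∑ a, ∑ b,
          (star ((extAnsatz dS dD dR U' *ᵥ Ψ i) a)
            * (((V : Matrix (Fin dS) (Fin dS) ℂ) ⊗ₖ
                  (1 : Matrix (Fin dD × Fin dR) (Fin dD × Fin dR) ℂ))
                * extMeas dS dD dR (H i)
                * ((V : Matrix (Fin dS) (Fin dS) ℂ) ⊗ₖ
                  (1 : Matrix (Fin dD × Fin dR) (Fin dD × Fin dR) ℂ))ᴴ) a b
            * ((extAnsatz dS dD dR (U θ₀) *ᵥ Ψ i) b)
          + star ((extAnsatz dS dD dR (U θ₀) *ᵥ Ψ i) a)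
            * (((V : Matrix (Fin dS) (Fin dS) ℂ) ⊗ₖ
                  (1 : Matrix (Fin dD × Fin dR) (Fin dD × Fin dR) ℂ))
                * extMeas dS dD dR (H i)
                * ((V : Matrix (Fin dS) (Fin dS) ℂ) ⊗ₖ
                  (1 : Matrix (Fin dD × Fin dR) (Fin dD × Fin dR) ℂ))ᴴ) a b
            * ((extAnsatz dS dD dR U' *ᵥ Ψ i) b))) θ₀ := by
    intro V
    refine HasDerivAt.fun_sum fun i _ => HasDerivAt.const_mul _ ?_
    refine HasDerivAt.fun_sum fun a _ => HasDerivAt.fun_sum fun b _ => ?_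
    exact ((hw i a).star.mul_const _).mul (hw i b)
  have hgval : ∀ V : Matrix.unitaryGroup (Fin dS) ℂ,
      g V = ∑ i, (p i : ℂ) * ∑ a, ∑ b,
          (star ((extAnsatz dS dD dR U' *ᵥ Ψ i) a)
            * (((V : Matrix (Fin dS) (Fin dS) ℂ) ⊗ₖ
                  (1 : Matrix (Fin dD × Fin dR) (Fin dD × Fin dR) ℂ))
                * extMeas dS dD dR (H i)
                * ((V : Matrix (Fin dS) (Fin dS) ℂ) ⊗ₖ
                  (1 : Matrix (Fin dD × Fin dR) (Fin dD × Fin dR) ℂ))ᴴ) a b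
            * ((extAnsatz dS dD dR (U θ₀) *ᵥ Ψ i) b)
          + star ((extAnsatz dS dD dR (U θ₀) *ᵥ Ψ i) a)
            * (((V : Matrix (Fin dS) (Fin dS) ℂ) ⊗ₖ
                  (1 : Matrix (Fin dD × Fin dR) (Fin dD × Fin dR) ℂ))
                * extMeas dS dD dR (H i)
                * ((V : Matrix (Fin dS) (Fin dS) ℂ) ⊗ₖ
                  (1 : Matrix (Fin dD × Fin dR) (Fin dD × Fin dR) ℂ))ᴴ) a b
            * ((extAnsatz dS dD dR U' *ᵥ Ψ i) b)) := by
    intro V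
    have h1 := hg V
    have heq : (fun θ : ℝ => ∑ i, (p i : ℂ) *
          (star (Ψ i) ⬝ᵥ
            ((extAnsatz dS dD dR (U θ))ᴴ *
              ((V : Matrix (Fin dS) (Fin dS) ℂ) ⊗ₖ
                (1 : Matrix (Fin dD × Fin dR) (Fin dD × Fin dR) ℂ)) *
              extMeas dS dD dR (H i) *
              ((V : Matrix (Fin dS) (Fin dS) ℂ) ⊗ₖ
                (1 : Matrix (Fin dD × Fin dR) (Fin dD × Fin dR) ℂ))ᴴ *
              extAnsatz dS dD dR (U θ)) *ᵥ Ψ i))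
        = (fun θ => ∑ i, (p i : ℂ) * ∑ a, ∑ b,
          star ((extAnsatz dS dD dR (U θ) *ᵥ Ψ i) a)
            * (((V : Matrix (Fin dS) (Fin dS) ℂ) ⊗ₖ
                  (1 : Matrix (Fin dD × Fin dR) (Fin dD × Fin dR) ℂ))
                * extMeas dS dD dR (H i)
                * ((V : Matrix (Fin dS) (Fin dS) ℂ) ⊗ₖ
                  (1 : Matrix (Fin dD × Fin dR) (Fin dD × Fin dR) ℂ))ᴴ) a b
            * ((extAnsatz dS dD dR (U θ) *ᵥ Ψ i) b)) := by
      funext θ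
      refine Finset.sum_congr rfl fun i _ => ?_
      congr 1
      rw [show (extAnsatz dS dD dR (U θ))ᴴ *
              ((V : Matrix (Fin dS) (Fin dS) ℂ) ⊗ₖ
                (1 : Matrix (Fin dD × Fin dR) (Fin dD × Fin dR) ℂ)) *
              extMeas dS dD dR (H i) *
              ((V : Matrix (Fin dS) (Fin dS) ℂ) ⊗ₖ
                (1 : Matrix (Fin dD × Fin dR) (Fin dD × Fin dR) ℂ))ᴴ *
              extAnsatz dS dD dR (U θ)
          = (extAnsatz dS dD dR (U θ))ᴴ *
              (((V : Matrix (Fin dS) (Fin dS) ℂ) ⊗ₖ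
                (1 : Matrix (Fin dD × Fin dR) (Fin dD × Fin dR) ℂ)) *
              extMeas dS dD dR (H i) *
              ((V : Matrix (Fin dS) (Fin dS) ℂ) ⊗ₖ
                (1 : Matrix (Fin dD × Fin dR) (Fin dD × Fin dR) ℂ))ᴴ) *
              extAnsatz dS dD dR (U θ) from by simp only [Matrix.mul_assoc]]
      exact quadform_expand _ _ _ _
    rw [heq] at h1
    exact h1.unique (hder V)
  set c : Fin k → (Fin dS × Fin dD × Fin dR) → (Fin dS × Fin dD × Fin dR) → Fin dS → Fin dS → ℂ :=
    fun i a b t s => (p i : ℂ) *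
      ((star ((extAnsatz dS dD dR U' *ᵥ Ψ i) a) * ((extAnsatz dS dD dR (U θ₀) *ᵥ Ψ i) b)
        + star ((extAnsatz dS dD dR (U θ₀) *ᵥ Ψ i) a) * ((extAnsatz dS dD dR U' *ᵥ Ψ i) b))
        * extMeas dS dD dR (H i) (s, a.2) (t, b.2)) with hc
  have hglin : ∀ V : Matrix.unitaryGroup (Fin dS) ℂ,
      g V = ∑ i, ∑ a, ∑ b, ∑ t, ∑ s, c i a b t s *
        ((V : Matrix (Fin dS) (Fin dS) ℂ) a.1 s * star ((V : Matrix (Fin dS) (Fin dS) ℂ) b.1 t)) := by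
    intro V
    rw [hgval V]
    refine Finset.sum_congr rfl fun i _ => ?_
    rw [Finset.mul_sum]
    refine Finset.sum_congr rfl fun a _ => ?_
    rw [Finset.mul_sum]
    refine Finset.sum_congr rfl fun b _ => ?_
    rw [sandwich_apply]
    simp only [hc, Finset.mul_sum, Finset.sum_mul, mul_add, ← Finset.sum_add_distrib]
    refine Finset.sum_congr rfl fun t _ => ?_
    refine Finset.sum_congr rfl fun s _ => ?_
    ring
  have hIbase : ∀ (i : Fin k) (a b : Fin dS × Fin dD × Fin dR) (t s : Fin dS),
      Integrable (fun V : Matrix.unitaryGroup (Fin dS) ℂ => c i a b t s *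
        ((V : Matrix (Fin dS) (Fin dS) ℂ) a.1 s * star ((V : Matrix (Fin dS) (Fin dS) ℂ) b.1 t))) μ :=
    fun i a b t s => (entry_integrable dS μ a.1 s b.1 t).const_mul _
  have hI4 : ∀ (i : Fin k) (a b : Fin dS × Fin dD × Fin dR) (t : Fin dS),
      Integrable (fun V : Matrix.unitaryGroup (Fin dS) ℂ => ∑ s, c i a b t s *
        ((V : Matrix (Fin dS) (Fin dS) ℂ) a.1 s * star ((V : Matrix (Fin dS) (Fin dS) ℂ) b.1 t))) μ :=
    fun i a b t => integrable_finset_sum _ fun s _ => hIbase i a b t s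
  have hI3 : ∀ (i : Fin k) (a b : Fin dS × Fin dD × Fin dR),
      Integrable (fun V : Matrix.unitaryGroup (Fin dS) ℂ => ∑ t, ∑ s, c i a b t s *
        ((V : Matrix (Fin dS) (Fin dS) ℂ) a.1 s * star ((V : Matrix (Fin dS) (Fin dS) ℂ) b.1 t))) μ :=
    fun i a b => integrable_finset_sum _ fun t _ => hI4 i a b t
  have hI2 : ∀ (i : Fin k) (a : Fin dS × Fin dD × Fin dR),
      Integrable (fun V : Matrix.unitaryGroup (Fin dS) ℂ => ∑ b, ∑ t, ∑ s, c i a b t s *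
        ((V : Matrix (Fin dS) (Fin dS) ℂ) a.1 s * star ((V : Matrix (Fin dS) (Fin dS) ℂ) b.1 t))) μ :=
    fun i a => integrable_finset_sum _ fun b _ => hI3 i a b
  have hI1 : ∀ (i : Fin k),
      Integrable (fun V : Matrix.unitaryGroup (Fin dS) ℂ => ∑ a, ∑ b, ∑ t, ∑ s, c i a b t s *
        ((V : Matrix (Fin dS) (Fin dS) ℂ) a.1 s * star ((V : Matrix (Fin dS) (Fin dS) ℂ) b.1 t))) μ :=
    fun i => integrable_finset_sum _ fun a _ => hI2 i a
  have hint : ∫ V : Matrix.unitaryGroup (Fin dS) ℂ, g V ∂μ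
      = ∑ i, ∑ a, ∑ b, ∑ t, ∑ s, c i a b t s * (if a.1 = b.1 ∧ s = t then (dS : ℂ)⁻¹ else 0) := by
    rw [integral_congr_ae (Filter.Eventually.of_forall hglin)]
    rw [integral_finset_sum _ fun i _ => hI1 i]
    refine Finset.sum_congr rfl fun i _ => ?_
    rw [integral_finset_sum _ fun a _ => hI2 i a]
    refine Finset.sum_congr rfl fun a _ => ?_
    rw [integral_finset_sum _ fun b _ => hI3 i a b]
    refine Finset.sum_congr rfl fun b _ => ?_
    rw [integral_finset_sum _ fun t _ => hI4 i a b t]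
    refine Finset.sum_congr rfl fun t _ => ?_
    rw [integral_finset_sum _ fun s _ => hIbase i a b t s]
    refine Finset.sum_congr rfl fun s _ => ?_
    rw [MeasureTheory.integral_const_mul, moment dS μ a.1 s b.1 t]
  rw [hint]
  refine Finset.sum_eq_zero fun i _ => ?_
  have hzero : (extAnsatz dS dD dR U')ᴴ * avgMeas dS dD dR (H i) * extAnsatz dS dD dR (U θ₀)
      + (extAnsatz dS dD dR (U θ₀))ᴴ * avgMeas dS dD dR (H i) * extAnsatz dS dD dR U' = 0 := by
    have hswap : ∀ A B : Matrix (Fin dS × Fin dD) (Fin dS × Fin dD) ℂ,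
        extAnsatz dS dD dR A * avgMeas dS dD dR (H i) * extAnsatz dS dD dR B
          = (extAnsatz dS dD dR A * extAnsatz dS dD dR B) * avgMeas dS dD dR (H i) := by
      intro A B
      rw [Matrix.mul_assoc, avgMeas_comm, ← Matrix.mul_assoc]
    rw [extA_conjTranspose, extA_conjTranspose, hswap, hswap, ← add_mul, ← extA_mul, ← extA_mul,
      ← extA_add, deriv_unitary θ₀ U hU U' hU', extA_zero, zero_mul]
  have hcol : ∀ a b : Fin dS × Fin dD × Fin dR,
      (∑ t, ∑ s, c i a b t s * (if a.1 = b.1 ∧ s = t then (dS : ℂ)⁻¹ else 0))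
        = (p i : ℂ) * ((star ((extAnsatz dS dD dR U' *ᵥ Ψ i) a) * ((extAnsatz dS dD dR (U θ₀) *ᵥ Ψ i) b)
            + star ((extAnsatz dS dD dR (U θ₀) *ᵥ Ψ i) a) * ((extAnsatz dS dD dR U' *ᵥ Ψ i) b))
            * avgMeas dS dD dR (H i) a b) := by
    intro a b
    simp only [hc, extMeas, avgMeas, Matrix.of_apply]
    by_cases hab : a.1 = b.1
    · by_cases hD : a.2.1 = b.2.1
      · simp only [hab, hD, if_true, eq_self_iff_true, true_and, mul_one, one_mul,
          mul_ite, mul_zero, Finset.sum_ite_eq', Finset.mem_univ]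
        simp only [Finset.mul_sum, Finset.sum_mul]
        exact Finset.sum_congr rfl fun t _ => by ring
      · simp [hab, hD]
    · simp [hab]
  calc (∑ a, ∑ b, ∑ t, ∑ s, c i a b t s * (if a.1 = b.1 ∧ s = t then (dS : ℂ)⁻¹ else 0))
      = ∑ a, ∑ b, (p i : ℂ) *
          ((star ((extAnsatz dS dD dR U' *ᵥ Ψ i) a) * ((extAnsatz dS dD dR (U θ₀) *ᵥ Ψ i) b)
            + star ((extAnsatz dS dD dR (U θ₀) *ᵥ Ψ i) a) * ((extAnsatz dS dD dR U' *ᵥ Ψ i) b))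
            * avgMeas dS dD dR (H i) a b) :=
        Finset.sum_congr rfl fun a _ => Finset.sum_congr rfl fun b _ => hcol a b
    _ = (p i : ℂ) * ∑ a, ∑ b,
          (star ((extAnsatz dS dD dR U' *ᵥ Ψ i) a) * avgMeas dS dD dR (H i) a b
              * ((extAnsatz dS dD dR (U θ₀) *ᵥ Ψ i) b)
            + star ((extAnsatz dS dD dR (U θ₀) *ᵥ Ψ i) a) * avgMeas dS dD dR (H i) a b
              * ((extAnsatz dS dD dR U' *ᵥ Ψ i) b)) := by
        rw [Finset.mul_sum]
        refine Finset.sum_congr rfl fun a _ => ?_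
        rw [Finset.mul_sum]
        exact Finset.sum_congr rfl fun b _ => by ring
    _ = (p i : ℂ) * ((∑ a, ∑ b, star ((extAnsatz dS dD dR U' *ᵥ Ψ i) a)
              * avgMeas dS dD dR (H i) a b * ((extAnsatz dS dD dR (U θ₀) *ᵥ Ψ i) b))
          + ∑ a, ∑ b, star ((extAnsatz dS dD dR (U θ₀) *ᵥ Ψ i) a)
              * avgMeas dS dD dR (H i) a b * ((extAnsatz dS dD dR U' *ᵥ Ψ i) b)) := by
        simp only [Finset.sum_add_distrib]
    _ = (p i : ℂ) * (star (Ψ i) ⬝ᵥ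
          (((extAnsatz dS dD dR U')ᴴ * avgMeas dS dD dR (H i) * extAnsatz dS dD dR (U θ₀)
            + (extAnsatz dS dD dR (U θ₀))ᴴ * avgMeas dS dD dR (H i) * extAnsatz dS dD dR U') *ᵥ Ψ i)) := by
        rw [Matrix.add_mulVec, dotProduct_add,
          ← quadform_expand (extAnsatz dS dD dR U') (extAnsatz dS dD dR (U θ₀))
            (avgMeas dS dD dR (H i)) (Ψ i),
          ← quadform_expand (extAnsatz dS dD dR (U θ₀)) (extAnsatz dS dD dR U')
            (avgMeas dS dD dR (H i)) (Ψ i)]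
    _ = 0 := by rw [hzero]; simp
end

section
/- Let d ≥ 2, let J be an arbitrary d×d complex matrix, and let φ, ξ ∈ ℂ^d be unit vectors. Then ∫ ⟨ξ, V J Vᴴ φ⟩ · ⟨φ, V J Vᴴ ξ⟩ dμ(V) = ( (Tr J)² · |⟨φ, ξ⟩|² + Tr(J²) )/(d² − 1) − ( Tr(J²) · |⟨φ, ξ⟩|² + (Tr J)² )/( d·(d² − 1) ). -/
open MeasureTheory Matrix
open scoped Kronecker

namespace HaarMoment

abbrev UG (d : ℕ) := Matrix.unitaryGroup (Fin d) ℂ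

instance UG.compact (d : ℕ) : CompactSpace (UG d) := by
  have key : IsCompact (Matrix.unitaryGroup (Fin d) ℂ : Set (Matrix (Fin d) (Fin d) ℂ)) := by
    have hsub : (Matrix.unitaryGroup (Fin d) ℂ : Set (Matrix (Fin d) (Fin d) ℂ)) ⊆
        Set.pi Set.univ (fun _ : Fin d => Set.pi Set.univ
          fun _ : Fin d => Metric.closedBall (0:ℂ) 1) := by
      intro A hA
      have h1 : A * star A = 1 := (Matrix.mem_unitaryGroup_iff).mp hA
      intro i _ j _
      have hdiag : (A * star A) i i = 1 := by rw [h1]; simp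
      rw [Matrix.mul_apply] at hdiag
      have hre : ∑ k, Complex.normSq (A i k) = 1 := by
        have := congrArg Complex.re hdiag
        simpa [Matrix.star_eq_conjTranspose, Matrix.conjTranspose_apply, Complex.mul_conj,
          Complex.re_sum] using this
      have hle : Complex.normSq (A i j) ≤ 1 := by
        rw [← hre]
        exact Finset.single_le_sum (fun k _ => Complex.normSq_nonneg _) (Finset.mem_univ j)
      simp only [Metric.mem_closedBall, dist_zero_right]
      have h2 : ‖A i j‖ ^ 2 ≤ 1 := by
        rw [Complex.normSq_eq_norm_sq] at hle
        simpa using hle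
      nlinarith [norm_nonneg (A i j)]
    have hclosed : IsClosed (Matrix.unitaryGroup (Fin d) ℂ : Set (Matrix (Fin d) (Fin d) ℂ)) := by
      have heq : (Matrix.unitaryGroup (Fin d) ℂ : Set (Matrix (Fin d) (Fin d) ℂ)) =
          (fun A : Matrix (Fin d) (Fin d) ℂ => A * star A) ⁻¹' {1} := by
        ext A; simp [Matrix.mem_unitaryGroup_iff]
      rw [heq]
      exact IsClosed.preimage (continuous_id.matrix_mul continuous_star) isClosed_singleton
    have hcpt : IsCompact (Set.pi Set.univ (fun _ : Fin d => Set.pi Set.univ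
        fun _ : Fin d => Metric.closedBall (0:ℂ) 1)) :=
      isCompact_univ_pi fun _ => isCompact_univ_pi fun _ => isCompact_closedBall _ _
    exact hcpt.of_isClosed_subset hclosed hsub
  exact isCompact_iff_compactSpace.mp key

section

variable {d : ℕ} (μ : Measure (UG d)) (J : Matrix (Fin d) (Fin d) ℂ)

/-- conjugated matrix -/
noncomputable def Mof (V : UG d) : Matrix (Fin d) (Fin d) ℂ :=
  (V : Matrix (Fin d) (Fin d) ℂ) * J * (V : Matrix (Fin d) (Fin d) ℂ)ᴴ

lemma contMof : Continuous fun V : UG d => Mof J V := by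
  have hcoe : Continuous fun V : UG d => (V : Matrix (Fin d) (Fin d) ℂ) := continuous_subtype_val
  exact (hcoe.matrix_mul continuous_const).matrix_mul hcoe.matrix_conjTranspose

lemma contEntry (F : UG d → Matrix (Fin d) (Fin d) ℂ) (hF : Continuous F) (i j : Fin d) :
    Continuous fun V : UG d => F V i j :=
  (continuous_apply j).comp ((continuous_apply i).comp hF)

/-- any continuous function on the compact unitary group is integrable -/
lemma integrable_cont [IsFiniteMeasure μ] {f : UG d → ℂ} (hf : Continuous f) :
    Integrable f μ :=
  hf.integrable_of_hasCompactSupport (IsClosed.isCompact (isClosed_tsupport f))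

/-- second-moment matrix -/
noncomputable def Phi : Matrix (Fin d × Fin d) (Fin d × Fin d) ℂ :=
  Matrix.of fun p q => ∫ V : UG d, Mof J V p.1 q.1 * Mof J V p.2 q.2 ∂μ

lemma Phi_apply (p q : Fin d × Fin d) :
    Phi μ J p q = ∫ V : UG d, Mof J V p.1 q.1 * Mof J V p.2 q.2 ∂μ := rfl

lemma kron_apply_eq (V : UG d) (p q : Fin d × Fin d) :
    (Mof J V ⊗ₖ Mof J V) p q = Mof J V p.1 q.1 * Mof J V p.2 q.2 := rfl

lemma integrable_entry [IsFiniteMeasure μ] (p q : Fin d × Fin d) :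
    Integrable (fun V : UG d => Mof J V p.1 q.1 * Mof J V p.2 q.2) μ :=
  integrable_cont μ (((contEntry _ (contMof J) _ _)).mul ((contEntry _ (contMof J) _ _)))

lemma kron_conjT {n m : Type*} [Fintype n] [Fintype m] (A : Matrix n n ℂ) (B : Matrix m m ℂ) :
    (A ⊗ₖ B)ᴴ = Aᴴ ⊗ₖ Bᴴ := by
  ext p q
  simp [Matrix.conjTranspose_apply, Matrix.kroneckerMap_apply, mul_comm]

/-- pull constant matrices out of an entrywise integral -/
lemma conj_int [IsFiniteMeasure μ] (K L : Matrix (Fin d × Fin d) (Fin d × Fin d) ℂ)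
    (p q : Fin d × Fin d) :
    (K * Phi μ J * L) p q = ∫ V : UG d, (K * (Mof J V ⊗ₖ Mof J V) * L) p q ∂μ := by
  have expand : ∀ A : Matrix (Fin d × Fin d) (Fin d × Fin d) ℂ,
      (K * A * L) p q = ∑ s, ∑ r, K p r * A r s * L s q := by
    intro A
    rw [Matrix.mul_apply]
    refine Finset.sum_congr rfl fun s _ => ?_
    rw [Matrix.mul_apply, Finset.sum_mul]
  simp only [expand]
  have hint : ∀ (s r : Fin d × Fin d),
      Integrable (fun V : UG d => K p r * (Mof J V ⊗ₖ Mof J V) r s * L s q) μ :=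
    fun s r => ((integrable_entry μ J r s).const_mul _).mul_const _
  rw [MeasureTheory.integral_finset_sum _
    (fun s _ => integrable_finset_sum _ fun r _ => hint s r)]
  refine Finset.sum_congr rfl fun s _ => ?_
  rw [MeasureTheory.integral_finset_sum _ (fun r _ => hint s r)]
  refine Finset.sum_congr rfl fun r _ => ?_
  simp only [mul_assoc]
  rw [MeasureTheory.integral_const_mul]
  rw [show (fun V : UG d => (Mof J V ⊗ₖ Mof J V) r s * L s q)
      = fun V : UG d => Mof J V r.1 s.1 * Mof J V r.2 s.2 * L s q from rfl,
    MeasureTheory.integral_mul_const]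
  rfl

/-- invariance of Phi -/
lemma Phi_inv [μ.IsHaarMeasure] [IsProbabilityMeasure μ] (g : UG d) :
    ((g : Matrix (Fin d) (Fin d) ℂ) ⊗ₖ (g : Matrix (Fin d) (Fin d) ℂ)) * Phi μ J *
      ((g : Matrix (Fin d) (Fin d) ℂ) ⊗ₖ (g : Matrix (Fin d) (Fin d) ℂ))ᴴ = Phi μ J := by
  ext p q
  set W := (g : Matrix (Fin d) (Fin d) ℂ)
  rw [conj_int μ J]
  have key : ∀ V : UG d,
      ((W ⊗ₖ W) * (Mof J V ⊗ₖ Mof J V) * (W ⊗ₖ W)ᴴ) p q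
        = Mof J (g * V) p.1 q.1 * Mof J (g * V) p.2 q.2 := by
    intro V
    have hM : W * Mof J V * Wᴴ = Mof J (g * V) := by
      show W * ((V : Matrix (Fin d) (Fin d) ℂ) * J * (V : Matrix (Fin d) (Fin d) ℂ)ᴴ) * Wᴴ
          = ((g * V : UG d) : Matrix (Fin d) (Fin d) ℂ) * J *
            ((g * V : UG d) : Matrix (Fin d) (Fin d) ℂ)ᴴ
      have hcoe : ((g * V : UG d) : Matrix (Fin d) (Fin d) ℂ)
          = W * (V : Matrix (Fin d) (Fin d) ℂ) := rfl
      rw [hcoe, Matrix.conjTranspose_mul]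
      noncomm_ring
    rw [kron_conjT, ← Matrix.mul_kronecker_mul, ← Matrix.mul_kronecker_mul, hM]
    rfl
  simp only [key]
  rw [Phi_apply]
  exact MeasureTheory.integral_mul_left_eq_self
    (fun V : UG d => Mof J V p.1 q.1 * Mof J V p.2 q.2) g

/-- commutation -/
lemma Phi_comm [μ.IsHaarMeasure] [IsProbabilityMeasure μ] (g : UG d) :
    ((g : Matrix (Fin d) (Fin d) ℂ) ⊗ₖ (g : Matrix (Fin d) (Fin d) ℂ)) * Phi μ J
      = Phi μ J * ((g : Matrix (Fin d) (Fin d) ℂ) ⊗ₖ (g : Matrix (Fin d) (Fin d) ℂ)) := by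
  set W := (g : Matrix (Fin d) (Fin d) ℂ) with hWdef
  have hU : Wᴴ * W = 1 := by
    have := (Unitary.mem_iff.mp g.2).1
    rwa [Matrix.star_eq_conjTranspose] at this
  have hK : (W ⊗ₖ W)ᴴ * (W ⊗ₖ W) = 1 := by
    rw [kron_conjT, ← Matrix.mul_kronecker_mul, hU, Matrix.one_kronecker_one]
  calc (W ⊗ₖ W) * Phi μ J
      = (W ⊗ₖ W) * Phi μ J * ((W ⊗ₖ W)ᴴ * (W ⊗ₖ W)) := by rw [hK, Matrix.mul_one]
    _ = ((W ⊗ₖ W) * Phi μ J * (W ⊗ₖ W)ᴴ) * (W ⊗ₖ W) := by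
        rw [Matrix.mul_assoc ((W ⊗ₖ W) * Phi μ J)]
    _ = Phi μ J * (W ⊗ₖ W) := by rw [Phi_inv μ J g]


/-- diagonal-unitary relation -/
lemma Phi_diag_rel [μ.IsHaarMeasure] [IsProbabilityMeasure μ] (z : Fin d → ℂ)
    (hz : ∀ k, z k * (starRingEnd ℂ) (z k) = 1) (p q : Fin d × Fin d) :
    (z p.1 * z p.2) * Phi μ J p q = Phi μ J p q * (z q.1 * z q.2) := by
  have hmem : Matrix.diagonal z ∈ Matrix.unitaryGroup (Fin d) ℂ := by
    rw [Matrix.mem_unitaryGroup_iff, Matrix.star_eq_conjTranspose, Matrix.diagonal_conjTranspose,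
      Matrix.diagonal_mul_diagonal]
    rw [show (fun i => z i * star z i) = fun _ => (1:ℂ) from funext fun k => by
      simpa using hz k]
    exact Matrix.diagonal_one
  have h := Phi_comm μ J ⟨Matrix.diagonal z, hmem⟩
  have hcoe : ((⟨Matrix.diagonal z, hmem⟩ : UG d) : Matrix (Fin d) (Fin d) ℂ)
      = Matrix.diagonal z := rfl
  rw [hcoe, Matrix.diagonal_kronecker_diagonal] at h
  have hh := congrFun (congrFun h p) q
  simpa [Matrix.diagonal_mul, Matrix.mul_diagonal] using hh

/-- zero pattern -/
lemma Phi_zero [μ.IsHaarMeasure] [IsProbabilityMeasure μ] (i1 i2 j1 j2 : Fin d)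
    (hne1 : ¬(j1 = i1 ∧ j2 = i2)) (hne2 : ¬(j1 = i2 ∧ j2 = i1)) :
    Phi μ J (i1, i2) (j1, j2) = 0 := by
  by_contra h0
  have key : ∀ m : Fin d,
      ((if i1 = m then Complex.I else 1) * (if i2 = m then Complex.I else 1))
        = ((if j1 = m then Complex.I else 1) * (if j2 = m then Complex.I else 1)) := by
    intro m
    have hz : ∀ k : Fin d, (if k = m then Complex.I else 1) *
        (starRingEnd ℂ) (if k = m then Complex.I else 1) = 1 := by
      intro k
      by_cases hk : k = m <;> simp [hk, Complex.conj_I]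
    have hrel := Phi_diag_rel μ J (fun k => if k = m then Complex.I else 1) hz (i1, i2) (j1, j2)
    simp only [] at hrel
    rw [mul_comm (Phi μ J (i1, i2) (j1, j2))] at hrel
    have := mul_right_cancel₀ h0 hrel
    simpa using this
  have count : ∀ m : Fin d,
      ((if i1 = m then 1 else 0) + (if i2 = m then 1 else 0) : ℕ)
        = (if j1 = m then 1 else 0) + (if j2 = m then 1 else 0) := by
    intro m
    have h := key m
    by_cases h1 : i1 = m <;> by_cases h2 : i2 = m <;> by_cases h3 : j1 = m <;>
        by_cases h4 : j2 = m <;>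
      simp only [h1, h2, h3, h4, if_true, if_false, one_mul, mul_one,
        Complex.I_mul_I] at h ⊢ <;>
      first
        | rfl
        | (exfalso; norm_num [Complex.ext_iff] at h)
  rcases eq_or_ne j1 i1 with h | h
  · refine hne1 ⟨h, ?_⟩
    by_contra a
    by_cases b : i1 = j2
    · by_cases e : i1 = i2
      · exact a (b.symm.trans e)
      · have c2 := count i2
        have hj1 : ¬ j1 = i2 := fun hh => e (h.symm.trans hh)
        have hj2 : ¬ j2 = i2 := a
        have he' : ¬ i1 = i2 := e
        simp [he', hj1, hj2] at c2
    · have a' : ¬ i2 = j2 := fun hh => a hh.symm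
      have hb' : ¬ j1 = j2 := fun hh => b (h.symm.trans hh)
      have c1 := count j2
      simp [b, a', hb'] at c1
  · have c1 := count j1
    have hji : j1 = i2 := by
      by_contra hc
      have h' : ¬ i1 = j1 := fun hh => h hh.symm
      have hc' : ¬ i2 = j1 := fun hh => hc hh.symm
      by_cases hd2 : j2 = j1 <;> simp [h', hc', hd2] at c1
    have c2 := count i1
    have hj2 : j2 = i1 := by
      by_contra hc
      by_cases hdd : i2 = i1 <;> simp [h, hc, hdd] at c2
    exact hne2 ⟨hji, hj2⟩

/-- permutation invariance -/
lemma Phi_perm [μ.IsHaarMeasure] [IsProbabilityMeasure μ] (σ : Equiv.Perm (Fin d))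
    (i1 i2 j1 j2 : Fin d) :
    Phi μ J (σ i1, σ i2) (σ j1, σ j2) = Phi μ J (i1, i2) (j1, j2) := by
  classical
  set W : Matrix (Fin d) (Fin d) ℂ := Matrix.of fun i j => if σ j = i then 1 else 0 with hW
  have hWa : ∀ i j, W i j = if σ j = i then 1 else 0 := fun i j => rfl
  have hmem : W ∈ Matrix.unitaryGroup (Fin d) ℂ := by
    rw [Matrix.mem_unitaryGroup_iff]
    ext i k
    rw [Matrix.mul_apply]
    rw [Fintype.sum_eq_single (σ.symm i) (fun j hj => ?_)]
    · simp [Matrix.star_eq_conjTranspose, Matrix.conjTranspose_apply, hWa,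
        Matrix.one_apply, Equiv.apply_symm_apply]
    · have : σ j ≠ i := fun hc => hj (by rw [← hc, Equiv.symm_apply_apply])
      simp [Matrix.star_eq_conjTranspose, Matrix.conjTranspose_apply, hWa, this]
  have h := congrFun (congrFun (Phi_comm μ J ⟨W, hmem⟩) (σ i1, σ i2)) (j1, j2)
  have hcoe : ((⟨W, hmem⟩ : UG d) : Matrix (Fin d) (Fin d) ℂ) = W := rfl
  rw [hcoe] at h
  rw [Matrix.mul_apply] at h
  rw [Matrix.mul_apply] at h
  rw [Fintype.sum_eq_single ((i1, i2) : Fin d × Fin d) (fun r hr => ?_)] at h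
  on_goal 2 =>
    have : r.1 ≠ i1 ∨ r.2 ≠ i2 := by
      by_contra hc
      push_neg at hc
      exact hr (Prod.ext hc.1 hc.2)
    rcases this with h1 | h1 <;>
      · simp only [Matrix.kroneckerMap_apply, hWa]
        have : σ r.1 ≠ σ i1 ∨ σ r.2 ≠ σ i2 := by
          first
          | exact Or.inl fun hc => h1 (σ.injective hc)
          | exact Or.inr fun hc => h1 (σ.injective hc)
        rcases this with h2 | h2 <;> simp [h2]
  rw [Fintype.sum_eq_single ((σ j1, σ j2) : Fin d × Fin d) (fun s hs => ?_)] at h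
  on_goal 2 =>
    have : s.1 ≠ σ j1 ∨ s.2 ≠ σ j2 := by
      by_contra hc
      push_neg at hc
      exact hs (Prod.ext hc.1 hc.2)
    rcases this with h1 | h1 <;>
      simp only [Matrix.kroneckerMap_apply, hWa] <;>
      · have h2 : ¬(σ j1 = s.1 ∧ σ j2 = s.2) := by
          intro hc
          rcases hc with ⟨hc1, hc2⟩
          first
          | exact h1 hc1.symm
          | exact h1 hc2.symm
        by_cases hb1 : σ j1 = s.1 <;> by_cases hb2 : σ j2 = s.2 <;>
          simp [hb1, hb2] <;> exact absurd ⟨hb1, hb2⟩ h2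
  simp only [Matrix.kroneckerMap_apply, hWa] at h
  simp at h
  exact h.symm

/-- a permutation carrying (e0,e1) to any pair of distinct indices -/
lemma exists_perm {e0 e1 i1 i2 : Fin d} (h01 : e0 ≠ e1) (h12 : i1 ≠ i2) :
    ∃ σ : Equiv.Perm (Fin d), σ e0 = i1 ∧ σ e1 = i2 := by
  classical
  have hti1 : Equiv.swap e0 i1 e1 ≠ i1 := by
    intro hc
    have h2 : Equiv.swap e0 i1 e1 = Equiv.swap e0 i1 e0 := by
      rw [hc, Equiv.swap_apply_left]
    exact h01 ((Equiv.swap e0 i1).injective h2).symm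
  refine ⟨(Equiv.swap e0 i1).trans (Equiv.swap (Equiv.swap e0 i1 e1) i2), ?_, ?_⟩
  · simp only [Equiv.trans_apply, Equiv.swap_apply_left]
    exact Equiv.swap_apply_of_ne_of_ne hti1.symm h12
  · simp only [Equiv.trans_apply]
    exact Equiv.swap_apply_left _ _

/-- the key extra relation from a non-monomial unitary (2x2 Hadamard rotation) -/
lemma Phi_rot [μ.IsHaarMeasure] [IsProbabilityMeasure μ] (u v : Fin d) (huv : u ≠ v) :
    Phi μ J (u, u) (u, u) = Phi μ J (u, v) (u, v) + Phi μ J (u, v) (v, u) := by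
  classical
  obtain ⟨c, hc, hcc, hc2⟩ : ∃ c : ℂ, c ≠ 0 ∧ (starRingEnd ℂ) c = c ∧ c * c = 1 / 2 := by
    refine ⟨((Real.sqrt 2 : ℝ) : ℂ)⁻¹, ?_, ?_, ?_⟩
    · refine inv_ne_zero ?_
      simp only [ne_eq, Complex.ofReal_eq_zero]
      positivity
    · rw [map_inv₀, Complex.conj_ofReal]
    · rw [← mul_inv, ← Complex.ofReal_mul,
        Real.mul_self_sqrt (by norm_num : (0:ℝ) ≤ 2)]
      norm_num
  set W : Matrix (Fin d) (Fin d) ℂ := Matrix.of (fun i j =>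
    if i = u then (if j = u then c else if j = v then c else 0)
    else if i = v then (if j = u then c else if j = v then -c else 0)
    else if j = i then 1 else 0) with hW
  have hWa : ∀ i j, W i j =
      if i = u then (if j = u then c else if j = v then c else 0)
      else if i = v then (if j = u then c else if j = v then -c else 0)
      else if j = i then 1 else 0 := fun i j => rfl
  have hstar : ∀ a b : Fin d, (star W) a b = (starRingEnd ℂ) (W b a) := fun a b => rfl
  have hmem : W ∈ Matrix.unitaryGroup (Fin d) ℂ := by
    rw [Matrix.mem_unitaryGroup_iff]
    ext i k
    rw [Matrix.mul_apply]
    simp only [hstar]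
    by_cases hi : i = u ∨ i = v
    · by_cases hk : k = u ∨ k = v
      · rw [Fintype.sum_eq_add u v huv (fun j hj => ?_)]
        · rcases hi with hi | hi <;> rcases hk with hk | hk <;> subst hi <;> subst hk <;>
            simp [hWa, huv, Ne.symm huv, hcc, Matrix.one_apply, map_neg] <;>
            linear_combination 2 * hc2
        · rcases hi with hi | hi <;> subst hi <;> simp [hWa, hj.1, hj.2]
      · push_neg at hk
        have hik : i ≠ k := by
          rcases hi with hi | hi <;> subst hi
          · exact fun hcon => hk.1 hcon.symm
          · exact fun hcon => hk.2 hcon.symm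
        rw [Matrix.one_apply_ne hik]
        refine Finset.sum_eq_zero fun j _ => ?_
        by_cases hjk : j = k
        · subst hjk
          rcases hi with hi | hi <;> subst hi <;> simp [hWa, hk.1, hk.2]
        · simp [hWa, hk.1, hk.2, hjk]
    · push_neg at hi
      rw [Fintype.sum_eq_single i (fun j hji => ?_)]
      · have hWii : W i i = 1 := by simp [hWa, hi.1, hi.2]
        rw [hWii, one_mul]
        by_cases hk : k = u
        · subst hk; simp [hWa, hi.1, hi.2, Matrix.one_apply]
        · by_cases hkv : k = v
          · subst hkv; simp [hWa, hi.1, hi.2, Matrix.one_apply]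
          · simp [hWa, hk, hkv, Matrix.one_apply, apply_ite, eq_comm]
      · simp [hWa, hi.1, hi.2, hji]
  have h := congrFun (congrFun (Phi_comm μ J ⟨W, hmem⟩)
    ((u, u) : Fin d × Fin d)) ((u, v) : Fin d × Fin d)
  have hcoe : ((⟨W, hmem⟩ : UG d) : Matrix (Fin d) (Fin d) ℂ) = W := rfl
  rw [hcoe] at h
  rw [Matrix.mul_apply] at h
  rw [Matrix.mul_apply] at h
  rw [Fintype.sum_eq_add ((u, v) : Fin d × Fin d) ((v, u) : Fin d × Fin d)
    (by simp [Prod.ext_iff, huv]) (fun r hr => ?_)] at h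
  on_goal 2 =>
    have hz : Phi μ J (r.1, r.2) (u, v) = 0 := by
      refine Phi_zero μ J r.1 r.2 u v (fun hcon => hr.1 ?_) (fun hcon => hr.2 ?_)
      · exact Prod.ext hcon.1.symm hcon.2.symm
      · exact Prod.ext hcon.2.symm hcon.1.symm
    rw [show Phi μ J r (u, v) = Phi μ J (r.1, r.2) (u, v) from rfl, hz, mul_zero]
  rw [Fintype.sum_eq_single ((u, u) : Fin d × Fin d) (fun s hs => ?_)] at h
  on_goal 2 =>
    have hz : Phi μ J (u, u) (s.1, s.2) = 0 := by
      refine Phi_zero μ J u u s.1 s.2 (fun hcon => hs ?_) (fun hcon => hs ?_) <;>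
        exact Prod.ext hcon.1 hcon.2
    rw [show Phi μ J (u, u) s = Phi μ J (u, u) (s.1, s.2) from rfl, hz, zero_mul]
  have hWuu : W u u = c := by simp [hWa]
  have hWuv : W u v = c := by simp [hWa, Ne.symm huv]
  simp only [Matrix.kroneckerMap_apply, hWuu, hWuv] at h
  have hcc0 : c * c ≠ 0 := mul_ne_zero hc hc
  have hswap : Phi μ J ((v : Fin d), u) (u, v) = Phi μ J (u, v) (v, u) := by
    rw [Phi_apply, Phi_apply]
    exact congrArg (fun f => ∫ V : UG d, f V ∂μ)
      (funext fun V : UG d => mul_comm (Mof J V v u) (Mof J V u v))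
  rw [hswap] at h
  have h2 : (c * c) * (Phi μ J (u, v) (u, v) + Phi μ J (u, v) (v, u))
      = (c * c) * Phi μ J (u, u) (u, u) := by linear_combination h
  exact (mul_left_cancel₀ hcc0 h2).symm

/-- structure of Phi: a multiple of identity plus a multiple of the swap -/
lemma Phi_structure [μ.IsHaarMeasure] [IsProbabilityMeasure μ] (hd : 2 ≤ d) :
    ∃ a b : ℂ, ∀ p q : Fin d × Fin d,
      Phi μ J p q = a * (if q = p then 1 else 0) + b * (if q = (p.2, p.1) then 1 else 0) := by
  classical
  have h0 : (0 : ℕ) < d := by omega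
  have h1 : (1 : ℕ) < d := by omega
  set e0 : Fin d := ⟨0, h0⟩ with he0
  set e1 : Fin d := ⟨1, h1⟩ with he1
  have h01 : e0 ≠ e1 := by simp [he0, he1, Fin.ext_iff]
  refine ⟨Phi μ J (e0, e1) (e0, e1), Phi μ J (e0, e1) (e1, e0), ?_⟩
  rintro ⟨i1, i2⟩ ⟨j1, j2⟩
  by_cases hq1 : ((j1, j2) : Fin d × Fin d) = (i1, i2)
  · have hj1 : j1 = i1 := congrArg Prod.fst hq1
    have hj2 : j2 = i2 := congrArg Prod.snd hq1
    subst hj1; subst hj2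
    by_cases hq2 : ((j1, j2) : Fin d × Fin d) = (j2, j1)
    · have hii : j1 = j2 := congrArg Prod.fst hq2
      subst hii
      obtain ⟨w, hw⟩ : ∃ w : Fin d, j1 ≠ w := by
        by_cases hj : j1 = e0
        · exact ⟨e1, by rw [hj]; exact h01⟩
        · exact ⟨e0, hj⟩
      rw [Phi_rot μ J j1 w hw]
      obtain ⟨σ, hσ0, hσ1⟩ := exists_perm h01 hw
      have ha := Phi_perm μ J σ e0 e1 e0 e1
      have hb := Phi_perm μ J σ e0 e1 e1 e0
      rw [hσ0, hσ1] at ha hb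
      rw [ha, hb]
      simp
    · have hne : j1 ≠ j2 := fun hcon => hq2 (by rw [hcon])
      obtain ⟨σ, hσ0, hσ1⟩ := exists_perm h01 hne
      have ha := Phi_perm μ J σ e0 e1 e0 e1
      rw [hσ0, hσ1] at ha
      rw [ha]
      have : ¬ ((j1, j2) : Fin d × Fin d) = (j2, j1) := hq2
      simp [this]
  · by_cases hq2 : ((j1, j2) : Fin d × Fin d) = (i2, i1)
    · have hj1 : j1 = i2 := congrArg Prod.fst hq2
      have hj2 : j2 = i1 := congrArg Prod.snd hq2
      subst hj1; subst hj2
      have hne : j2 ≠ j1 := by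
        intro hcon
        exact hq1 (by rw [hcon])
      obtain ⟨σ, hσ0, hσ1⟩ := exists_perm h01 hne
      have hb := Phi_perm μ J σ e0 e1 e1 e0
      rw [hσ0, hσ1] at hb
      rw [hb]
      simp [hq1]
    · have hz := Phi_zero μ J i1 i2 j1 j2
        (fun hcon => hq1 (Prod.ext hcon.1 hcon.2))
        (fun hcon => hq2 (Prod.ext hcon.1 hcon.2))
      rw [hz]
      simp [hq1, hq2]

lemma unitary_CT_mul (V : UG d) :
    (V : Matrix (Fin d) (Fin d) ℂ)ᴴ * (V : Matrix (Fin d) (Fin d) ℂ) = 1 := by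
  have := (Unitary.mem_iff.mp V.2).1
  rwa [Matrix.star_eq_conjTranspose] at this

lemma Mof_trace (V : UG d) : (Mof J V).trace = J.trace := by
  rw [Mof, Matrix.trace_mul_cycle, unitary_CT_mul, Matrix.one_mul]

lemma Mof_mul (V : UG d) : Mof J V * Mof J V = Mof (J * J) V := by
  rw [Mof, Mof]
  have h := unitary_CT_mul (d := d) V
  calc (V : Matrix (Fin d) (Fin d) ℂ) * J * (V : Matrix (Fin d) (Fin d) ℂ)ᴴ *
        ((V : Matrix (Fin d) (Fin d) ℂ) * J * (V : Matrix (Fin d) (Fin d) ℂ)ᴴ)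
      = (V : Matrix (Fin d) (Fin d) ℂ) * J *
          ((V : Matrix (Fin d) (Fin d) ℂ)ᴴ * (V : Matrix (Fin d) (Fin d) ℂ)) *
          (J * (V : Matrix (Fin d) (Fin d) ℂ)ᴴ) := by
        simp only [Matrix.mul_assoc]
    _ = (V : Matrix (Fin d) (Fin d) ℂ) * (J * J) * (V : Matrix (Fin d) (Fin d) ℂ)ᴴ := by
        rw [h, Matrix.mul_one]
        simp only [Matrix.mul_assoc]

lemma trace_eq1 [μ.IsHaarMeasure] [IsProbabilityMeasure μ] :
    ∑ p : Fin d × Fin d, Phi μ J p p = J.trace ^ 2 := by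
  have hswap : ∑ p : Fin d × Fin d, Phi μ J p p
      = ∫ V : UG d, ∑ p : Fin d × Fin d, Mof J V p.1 p.1 * Mof J V p.2 p.2 ∂μ := by
    rw [MeasureTheory.integral_finset_sum _ (fun p _ => integrable_entry μ J p p)]
    rfl
  rw [hswap]
  have key : ∀ A : Matrix (Fin d) (Fin d) ℂ,
      ∑ p : Fin d × Fin d, A p.1 p.1 * A p.2 p.2 = A.trace * A.trace := by
    intro A
    rw [Fintype.sum_prod_type]
    rw [show A.trace = ∑ i, A i i from rfl]
    exact (Finset.sum_mul_sum Finset.univ Finset.univ (fun i => A i i) (fun j => A j j)).symm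
  have hval : ∀ V : UG d,
      ∑ p : Fin d × Fin d, Mof J V p.1 p.1 * Mof J V p.2 p.2 = J.trace ^ 2 := by
    intro V
    rw [key (Mof J V), Mof_trace, sq]
  simp only [hval]
  simp

lemma trace_eq2 [μ.IsHaarMeasure] [IsProbabilityMeasure μ] :
    ∑ p : Fin d × Fin d, Phi μ J p (p.2, p.1) = (J * J).trace := by
  have hswap : ∑ p : Fin d × Fin d, Phi μ J p (p.2, p.1)
      = ∫ V : UG d, ∑ p : Fin d × Fin d, Mof J V p.1 p.2 * Mof J V p.2 p.1 ∂μ := by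
    rw [MeasureTheory.integral_finset_sum _ (fun p _ => integrable_entry μ J p (p.2, p.1))]
    rfl
  rw [hswap]
  have hval : ∀ V : UG d,
      ∑ p : Fin d × Fin d, Mof J V p.1 p.2 * Mof J V p.2 p.1 = (J * J).trace := by
    intro V
    have key : ∀ A : Matrix (Fin d) (Fin d) ℂ,
        ∑ p : Fin d × Fin d, A p.1 p.2 * A p.2 p.1 = (A * A).trace := by
      intro A
      rw [Fintype.sum_prod_type]
      rw [show (A * A).trace = ∑ i, (A * A) i i from rfl]
      refine Finset.sum_congr rfl fun i _ => ?_
      rw [Matrix.mul_apply]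
    rw [key (Mof J V), Mof_mul, Mof_trace]
  simp only [hval]
  simp

end

end HaarMoment

/-- For `d ≥ 2`, an arbitrary `d × d` complex matrix `J`, unit vectors `φ, ξ ∈ ℂ^d`, and `μ` the
normalized Haar probability measure on `U(d)`:
`∫ ⟨ξ, V J Vᴴ φ⟩ ⟨φ, V J Vᴴ ξ⟩ dμ(V)
  = ((Tr J)² |⟨φ,ξ⟩|² + Tr(J²)) / (d² − 1) − (Tr(J²) |⟨φ,ξ⟩|² + (Tr J)²) / (d (d² − 1))`. -/
theorem haar_second_moment_offdiagonal (d : ℕ) (hd : 2 ≤ d)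
    (μ : Measure (Matrix.unitaryGroup (Fin d) ℂ)) [μ.IsHaarMeasure] [IsProbabilityMeasure μ]
    (J : Matrix (Fin d) (Fin d) ℂ)
    (φ ξ : Fin d → ℂ) (hφ : star φ ⬝ᵥ φ = 1) (hξ : star ξ ⬝ᵥ ξ = 1) :
    ∫ V : Matrix.unitaryGroup (Fin d) ℂ,
        (star ξ ⬝ᵥ ((V : Matrix (Fin d) (Fin d) ℂ) * J * (V : Matrix (Fin d) (Fin d) ℂ)ᴴ) *ᵥ φ) *
          (star φ ⬝ᵥ ((V : Matrix (Fin d) (Fin d) ℂ) * J * (V : Matrix (Fin d) (Fin d) ℂ)ᴴ) *ᵥ ξ)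
        ∂μ
      = (J.trace ^ 2 * (‖star φ ⬝ᵥ ξ‖ : ℂ) ^ 2 + (J * J).trace) / ((d : ℂ) ^ 2 - 1)
          - ((J * J).trace * (‖star φ ⬝ᵥ ξ‖ : ℂ) ^ 2 + J.trace ^ 2)
            / ((d : ℂ) * ((d : ℂ) ^ 2 - 1)) := by
  classical
  obtain ⟨a, b, hstruct⟩ := HaarMoment.Phi_structure μ J hd
  -- the two linear trace equations
  have E1 : (d : ℂ) ^ 2 * a + (d : ℂ) * b = J.trace ^ 2 := by
    have h := HaarMoment.trace_eq1 μ J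
    rw [show (∑ p : Fin d × Fin d, HaarMoment.Phi μ J p p)
        = ∑ p : Fin d × Fin d, (a * 1 + b * (if p = ((p.2, p.1) : Fin d × Fin d) then 1 else 0))
        from Finset.sum_congr rfl fun p _ => by rw [hstruct p p, if_pos rfl]] at h
    rw [Finset.sum_add_distrib] at h
    have hA : ∑ _p : Fin d × Fin d, a * 1 = (d : ℂ) ^ 2 * a := by
      simp only [mul_one]
      rw [Finset.sum_const, Finset.card_univ, nsmul_eq_mul]
      rw [Fintype.card_prod, Fintype.card_fin]
      push_cast
      ring
    have hB : ∑ p : Fin d × Fin d, b * (if p = ((p.2, p.1) : Fin d × Fin d) then 1 else 0)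
        = (d : ℂ) * b := by
      have hc : ∀ p : Fin d × Fin d, (p = ((p.2, p.1) : Fin d × Fin d)) ↔ p.1 = p.2 := by
        intro p
        constructor
        · intro hcon; exact congrArg Prod.fst hcon
        · intro hcon; exact Prod.ext hcon hcon.symm
      simp only [hc]
      rw [Fintype.sum_prod_type]
      simp only [mul_ite, mul_one, mul_zero]
      rw [show (∑ i : Fin d, ∑ j : Fin d, if i = j then b else 0)
          = ∑ _i : Fin d, b from Finset.sum_congr rfl fun i _ => by
        simp [Finset.sum_ite_eq]]
      rw [Finset.sum_const, Finset.card_univ, Fintype.card_fin, nsmul_eq_mul]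
    rw [hA, hB] at h
    exact h
  have E2 : (d : ℂ) * a + (d : ℂ) ^ 2 * b = (J * J).trace := by
    have h := HaarMoment.trace_eq2 μ J
    rw [show (∑ p : Fin d × Fin d, HaarMoment.Phi μ J p (p.2, p.1))
        = ∑ p : Fin d × Fin d,
            (a * (if ((p.2, p.1) : Fin d × Fin d) = p then 1 else 0) + b * 1)
        from Finset.sum_congr rfl fun p _ => by rw [hstruct p (p.2, p.1), if_pos rfl]] at h
    rw [Finset.sum_add_distrib] at h
    have hA : ∑ p : Fin d × Fin d, a * (if ((p.2, p.1) : Fin d × Fin d) = p then 1 else 0)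
        = (d : ℂ) * a := by
      have hc : ∀ p : Fin d × Fin d, (((p.2, p.1) : Fin d × Fin d) = p) ↔ p.2 = p.1 := by
        intro p
        constructor
        · intro hcon; exact congrArg Prod.fst hcon
        · intro hcon; exact Prod.ext hcon hcon.symm
      simp only [hc]
      rw [Fintype.sum_prod_type]
      simp only [mul_ite, mul_one, mul_zero]
      rw [show (∑ i : Fin d, ∑ j : Fin d, if j = i then a else 0)
          = ∑ _i : Fin d, a from Finset.sum_congr rfl fun i _ => by
        simp [Finset.sum_ite_eq']]
      rw [Finset.sum_const, Finset.card_univ, Fintype.card_fin, nsmul_eq_mul]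
    have hB : ∑ _p : Fin d × Fin d, b * 1 = (d : ℂ) ^ 2 * b := by
      simp only [mul_one]
      rw [Finset.sum_const, Finset.card_univ, nsmul_eq_mul]
      rw [Fintype.card_prod, Fintype.card_fin]
      push_cast
      ring
    rw [hA, hB] at h
    exact h
  -- expansion of the integrand
  have gen : ∀ A : Matrix (Fin d) (Fin d) ℂ,
      (star ξ ⬝ᵥ A *ᵥ φ) * (star φ ⬝ᵥ A *ᵥ ξ)
        = ∑ p : Fin d × Fin d, ∑ q : Fin d × Fin d,
            star (ξ p.1) * φ q.1 * (star (φ p.2) * ξ q.2) * (A p.1 q.1 * A p.2 q.2) := by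
    intro A
    have h1 : star ξ ⬝ᵥ A *ᵥ φ = ∑ i, ∑ j, star (ξ i) * A i j * φ j := by
      rw [dotProduct]
      refine Finset.sum_congr rfl fun i _ => ?_
      rw [Matrix.mulVec, dotProduct, Finset.mul_sum]
      refine Finset.sum_congr rfl fun j _ => ?_
      simp [mul_assoc]
    have h2 : star φ ⬝ᵥ A *ᵥ ξ = ∑ i, ∑ j, star (φ i) * A i j * ξ j := by
      rw [dotProduct]
      refine Finset.sum_congr rfl fun i _ => ?_
      rw [Matrix.mulVec, dotProduct, Finset.mul_sum]
      refine Finset.sum_congr rfl fun j _ => ?_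
      simp [mul_assoc]
    rw [h1, h2, Finset.sum_mul_sum]
    simp only [Fintype.sum_prod_type]
    refine Finset.sum_congr rfl fun i _ => ?_
    refine Finset.sum_congr rfl fun k _ => ?_
    rw [Finset.sum_mul_sum]
    refine Finset.sum_congr rfl fun j _ => ?_
    refine Finset.sum_congr rfl fun l _ => ?_
    ring
  -- the integral in terms of Phi
  have hmain : (∫ V : Matrix.unitaryGroup (Fin d) ℂ,
        (star ξ ⬝ᵥ HaarMoment.Mof J V *ᵥ φ) * (star φ ⬝ᵥ HaarMoment.Mof J V *ᵥ ξ) ∂μ)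
      = a * ((star ξ ⬝ᵥ φ) * (star φ ⬝ᵥ ξ)) + b * ((star ξ ⬝ᵥ ξ) * (star φ ⬝ᵥ φ)) := by
    calc (∫ V : Matrix.unitaryGroup (Fin d) ℂ,
          (star ξ ⬝ᵥ HaarMoment.Mof J V *ᵥ φ) * (star φ ⬝ᵥ HaarMoment.Mof J V *ᵥ ξ) ∂μ)
        = ∑ p : Fin d × Fin d, ∑ q : Fin d × Fin d,
            star (ξ p.1) * φ q.1 * (star (φ p.2) * ξ q.2) * HaarMoment.Phi μ J p q := by
          simp only [gen]
          rw [MeasureTheory.integral_finset_sum _ (fun p _ =>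
            integrable_finset_sum _ fun q _ =>
              (HaarMoment.integrable_entry μ J p q).const_mul _)]
          refine Finset.sum_congr rfl fun p _ => ?_
          rw [MeasureTheory.integral_finset_sum _ (fun q _ =>
            (HaarMoment.integrable_entry μ J p q).const_mul _)]
          refine Finset.sum_congr rfl fun q _ => ?_
          rw [MeasureTheory.integral_const_mul]
          rfl
      _ = ∑ p : Fin d × Fin d,
            ((star (ξ p.1) * φ p.1 * (star (φ p.2) * ξ p.2)) * a
              + (star (ξ p.1) * φ p.2 * (star (φ p.2) * ξ p.1)) * b) := by
          refine Finset.sum_congr rfl fun p _ => ?_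
          simp only [hstruct, mul_add, mul_ite, mul_one, mul_zero]
          rw [Finset.sum_add_distrib]
          rw [Finset.sum_ite_eq' Finset.univ p
            (fun q => star (ξ p.1) * φ q.1 * (star (φ p.2) * ξ q.2) * a)]
          rw [Finset.sum_ite_eq' Finset.univ ((p.2, p.1) : Fin d × Fin d)
            (fun q => star (ξ p.1) * φ q.1 * (star (φ p.2) * ξ q.2) * b)]
          simp
      _ = a * ((star ξ ⬝ᵥ φ) * (star φ ⬝ᵥ ξ)) + b * ((star ξ ⬝ᵥ ξ) * (star φ ⬝ᵥ φ)) := by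
          rw [Finset.sum_add_distrib, ← Finset.sum_mul, ← Finset.sum_mul]
          have hdiag : ∑ p : Fin d × Fin d, star (ξ p.1) * φ p.1 * (star (φ p.2) * ξ p.2)
              = (star ξ ⬝ᵥ φ) * (star φ ⬝ᵥ ξ) := by
            rw [dotProduct, dotProduct, Finset.sum_mul_sum, Fintype.sum_prod_type]
            refine Finset.sum_congr rfl fun i _ => Finset.sum_congr rfl fun k _ => ?_
            simp [mul_assoc]
          have hsw : ∑ p : Fin d × Fin d, star (ξ p.1) * φ p.2 * (star (φ p.2) * ξ p.1)
              = (star ξ ⬝ᵥ ξ) * (star φ ⬝ᵥ φ) := by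
            rw [dotProduct, dotProduct, Finset.sum_mul_sum, Fintype.sum_prod_type]
            refine Finset.sum_congr rfl fun i _ => Finset.sum_congr rfl fun k _ => ?_
            simp only [Pi.star_apply]
            ring
          rw [hdiag, hsw]
          ring
  -- norm identity
  have hc1 : (star ξ ⬝ᵥ φ) * (star φ ⬝ᵥ ξ) = ((‖star φ ⬝ᵥ ξ‖ : ℝ) : ℂ) ^ 2 := by
    have hconj : star ξ ⬝ᵥ φ = (starRingEnd ℂ) (star φ ⬝ᵥ ξ) := by
      rw [dotProduct, dotProduct, map_sum]
      refine Finset.sum_congr rfl fun i _ => ?_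
      simp only [Pi.star_apply, _root_.map_mul, Complex.star_def, Complex.conj_conj]
      ring
    rw [hconj, mul_comm, Complex.mul_conj]
    rw [Complex.normSq_eq_norm_sq, Complex.ofReal_pow]
  -- nonvanishing denominators
  have hd0 : (d : ℂ) ≠ 0 := Nat.cast_ne_zero.mpr (by omega)
  have hd1 : (d : ℂ) ^ 2 - 1 ≠ 0 := by
    intro hcon
    have h4 : ((d ^ 2 : ℕ) : ℂ) = ((1 : ℕ) : ℂ) := by push_cast; linear_combination hcon
    have h5 : d ^ 2 = 1 := Nat.cast_injective h4
    have h6 : 2 ^ 2 ≤ d ^ 2 := Nat.pow_le_pow_left hd 2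
    omega
  -- solve for a and b
  have ha : a = ((d : ℂ) * J.trace ^ 2 - (J * J).trace) / ((d : ℂ) * ((d : ℂ) ^ 2 - 1)) := by
    rw [eq_div_iff (mul_ne_zero hd0 hd1)]
    linear_combination (d : ℂ) * E1 - E2
  have hb : b = ((d : ℂ) * (J * J).trace - J.trace ^ 2) / ((d : ℂ) * ((d : ℂ) ^ 2 - 1)) := by
    rw [eq_div_iff (mul_ne_zero hd0 hd1)]
    linear_combination (d : ℂ) * E2 - E1
  calc (∫ V : Matrix.unitaryGroup (Fin d) ℂ,
        (star ξ ⬝ᵥ ((V : Matrix (Fin d) (Fin d) ℂ) * J * (V : Matrix (Fin d) (Fin d) ℂ)ᴴ) *ᵥ φ) *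
          (star φ ⬝ᵥ ((V : Matrix (Fin d) (Fin d) ℂ) * J * (V : Matrix (Fin d) (Fin d) ℂ)ᴴ) *ᵥ ξ)
        ∂μ)
      = a * ((star ξ ⬝ᵥ φ) * (star φ ⬝ᵥ ξ)) + b * ((star ξ ⬝ᵥ ξ) * (star φ ⬝ᵥ φ)) := hmain
    _ = a * ((‖star φ ⬝ᵥ ξ‖ : ℝ) : ℂ) ^ 2 + b := by rw [hc1, hξ, hφ]; ring
    _ = (J.trace ^ 2 * (‖star φ ⬝ᵥ ξ‖ : ℂ) ^ 2 + (J * J).trace) / ((d : ℂ) ^ 2 - 1)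
          - ((J * J).trace * (‖star φ ⬝ᵥ ξ‖ : ℂ) ^ 2 + J.trace ^ 2)
            / ((d : ℂ) * ((d : ℂ) ^ 2 - 1)) := by
        rw [ha, hb]
        field_simp
        ring
end
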